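/- arXiv:2405.13439 — 6 statements merged into one kernel-verified Lean document; each statement's English description precedes it below -/
import Mathlib

section
/- For all integers 0 ≤ k ≤ n, the unsigned Stirling number of the first kind satisfies the inequality [n choose-bracket n−k] · ((n−k)!/n!)² ≤ 1/k!. -/
open Polynomial

/-- Unsigned Stirling numbers of the first kind, defined as coefficients of the rising
factorial: `x (x+1) ⋯ (x+n-1) = ∑ k, stirling1 n k * x^k`. -/
noncomputable def stirling1 (n k : ℕ) : ℕ := (ascPochhammer ℕ n).coeff k

lemma stirling1_self (n : ℕ) : stirling1 n n = 1 := by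
  have h := (monic_ascPochhammer ℕ n).coeff_natDegree
  rwa [ascPochhammer_natDegree] at h

lemma stirling1_zero_succ (n : ℕ) : stirling1 (n + 1) 0 = 0 := by
  have := ascPochhammer_eval_zero (S := ℕ) (n := n + 1)
  simp only [Nat.succ_ne_zero, if_false] at this
  simpa [stirling1, Polynomial.coeff_zero_eq_eval_zero] using this

lemma stirling1_rec (n j : ℕ) :
    stirling1 (n + 1) (j + 1) = stirling1 n j + n * stirling1 n (j + 1) := by
  unfold stirling1
  rw [ascPochhammer_succ_right, mul_add, coeff_add, coeff_mul_X]
  have : ((n : ℕ[X])) = C (n : ℕ) := by simp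
  rw [this, coeff_mul_C]
  ring

lemma key : ∀ n j k : ℕ, n = j + k →
    stirling1 n j * Nat.factorial k * (Nat.factorial j) ^ 2 ≤ (Nat.factorial n) ^ 2 := by
  intro n
  induction n with
  | zero => intro j k h; obtain ⟨rfl, rfl⟩ : j = 0 ∧ k = 0 := by omega
            simp [stirling1, Nat.factorial]
  | succ n ih =>
    intro j k h
    match j, k with
    | 0, k => simp [stirling1_zero_succ]
    | j + 1, 0 =>
      have hj : j = n := by omega
      subst hj
      simp [stirling1_self, Nat.factorial]
    | j + 1, k + 1 =>
      have hn : n = j + (k + 1) := by omega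
      have h1 := ih j (k + 1) hn
      have h2 := ih (j + 1) k (by omega)
      rw [stirling1_rec]
      have e1 : (stirling1 n j + n * stirling1 n (j + 1)) * Nat.factorial (k + 1) *
          Nat.factorial (j + 1) ^ 2
          = (stirling1 n j * Nat.factorial (k + 1) * Nat.factorial j ^ 2) * (j + 1) ^ 2
            + n * (k + 1) * (stirling1 n (j + 1) * Nat.factorial k * Nat.factorial (j + 1) ^ 2) := by
        rw [Nat.factorial_succ k, Nat.factorial_succ j]
        ring
      rw [e1]
      calc (stirling1 n j * Nat.factorial (k + 1) * Nat.factorial j ^ 2) * (j + 1) ^ 2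
            + n * (k + 1) * (stirling1 n (j + 1) * Nat.factorial k * Nat.factorial (j + 1) ^ 2)
          ≤ Nat.factorial n ^ 2 * (j + 1) ^ 2 + n * (k + 1) * Nat.factorial n ^ 2 := by
            gcongr
        _ ≤ Nat.factorial (n + 1) ^ 2 := by
            rw [Nat.factorial_succ]
            have : (j + 1) ^ 2 + n * (k + 1) ≤ (n + 1) ^ 2 := by nlinarith [hn]
            nlinarith [Nat.factorial_pos n, this]

theorem stmt_2 (n k : ℕ) (hk : k ≤ n) :
    (stirling1 n (n - k) : ℝ) * ((Nat.factorial (n - k) : ℝ) / Nat.factorial n) ^ 2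
      ≤ 1 / Nat.factorial k := by
  have hnat := key n (n - k) k (by omega)
  have hcast : (stirling1 n (n - k) : ℝ) * Nat.factorial k * (Nat.factorial (n - k) : ℝ) ^ 2
      ≤ (Nat.factorial n : ℝ) ^ 2 := by exact_mod_cast hnat
  have hn : (0 : ℝ) < Nat.factorial n := by exact_mod_cast Nat.factorial_pos n
  have hkpos : (0 : ℝ) < Nat.factorial k := by exact_mod_cast Nat.factorial_pos k
  rw [div_pow, ← mul_div_assoc, div_le_div_iff₀ (by positivity) hkpos]
  nlinarith [hcast]
end

section
/- The Legendre transform I(x) = sup_{t ∈ ℝ} { x t − L(t) }, where L(t) = log((e^t − 1)/t), satisfies the symmetry I(x) = I(1−x) for all x ∈ ℝ, attains its minimum value 0 uniquely at x = 1/2, and I(x) = +∞ for x outside [0,1]. -/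
open Real

/-- The limiting cumulant generating function `L(t) = log((e^t - 1)/t)`, extended by `L(0)=0`. -/
noncomputable def L (t : ℝ) : ℝ := if t = 0 then 0 else Real.log ((Real.exp t - 1) / t)

/-- The Fenchel–Legendre transform `I(x) = sup_t (x t - L(t))`, with values in `EReal`. -/
noncomputable def Irate (x : ℝ) : EReal := ⨆ t : ℝ, ((x * t - L t : ℝ) : EReal)

lemma auxA (u : ℝ) (hu : 0 ≤ u) : Real.sinh u ≤ u * Real.cosh u := by
  set f : ℝ → ℝ := fun w => w * Real.cosh w - Real.sinh w with hf
  have hder : ∀ v : ℝ, HasDerivAt f (v * Real.sinh v) v := by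
    intro v
    have h1 : HasDerivAt (fun w : ℝ => w * Real.cosh w) (1 * Real.cosh v + v * Real.sinh v) v :=
      (hasDerivAt_id v).mul (Real.hasDerivAt_cosh v)
    have := h1.sub (Real.hasDerivAt_sinh v)
    exact this.congr_deriv (by ring)
  have hmono : MonotoneOn f (Set.Ici 0) := by
    apply monotoneOn_of_deriv_nonneg (convex_Ici 0)
    · exact fun v _ => ((hder v).continuousAt).continuousWithinAt
    · exact fun v _ => ((hder v).differentiableAt).differentiableWithinAt
    · intro v hv
      rw [interior_Ici, Set.mem_Ioi] at hv
      rw [(hder v).deriv]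
      exact mul_nonneg hv.le (Real.sinh_nonneg_iff.mpr hv.le)
  have := hmono (Set.self_mem_Ici) (Set.mem_Ici.mpr hu) hu
  simp only [hf, Real.cosh_zero, Real.sinh_zero, mul_one, zero_mul, sub_zero] at this
  linarith [this]

lemma auxB (u : ℝ) : Real.log (Real.cosh u) ≤ u ^ 2 / 2 := by
  -- reduce to u ≥ 0 by evenness
  wlog hu : 0 ≤ u with H
  · have := H (-u) (by linarith)
    simpa [Real.cosh_neg] using this
  set f : ℝ → ℝ := fun w => w ^ 2 / 2 - Real.log (Real.cosh w) with hf
  have hder : ∀ v : ℝ, HasDerivAt f (v - Real.sinh v / Real.cosh v) v := by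
    intro v
    have h1 : HasDerivAt (fun w : ℝ => w ^ 2 / 2) ((2 : ℕ) * v ^ 1 / 2) v :=
      (hasDerivAt_pow 2 v).div_const 2
    have h2 : HasDerivAt (fun w : ℝ => Real.log (Real.cosh w)) (Real.sinh v / Real.cosh v) v :=
      (Real.hasDerivAt_cosh v).log (ne_of_gt (Real.cosh_pos v))
    have := h1.sub h2
    exact this.congr_deriv (by ring)
  have hmono : MonotoneOn f (Set.Ici 0) := by
    apply monotoneOn_of_deriv_nonneg (convex_Ici 0)
    · exact fun v _ => ((hder v).continuousAt).continuousWithinAt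
    · exact fun v _ => ((hder v).differentiableAt).differentiableWithinAt
    · intro v hv
      rw [interior_Ici, Set.mem_Ioi] at hv
      rw [(hder v).deriv]
      have := auxA v hv.le
      rw [sub_nonneg, div_le_iff₀ (Real.cosh_pos v)]
      linarith
  have := hmono (Set.self_mem_Ici) (Set.mem_Ici.mpr hu) hu
  simp only [hf, Real.cosh_zero, Real.log_one, sub_zero] at this
  simp only [ne_eq, OfNat.ofNat_ne_zero, not_false_eq_true, zero_pow, zero_div, sub_zero] at this
  linarith [this]

-- sinh u / u ≤ cosh u for u ≠ 0
lemma auxA' (u : ℝ) (hu : u ≠ 0) : Real.sinh u / u ≤ Real.cosh u := by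
  rcases lt_or_gt_of_ne hu with h | h
  · have := auxA (-u) (by linarith)
    rw [Real.sinh_neg, Real.cosh_neg] at this
    rw [div_le_iff_of_neg h]
    nlinarith
  · rw [div_le_iff₀ h]
    have := auxA u h.le
    linarith

-- 1 ≤ sinh u / u for u ≠ 0
lemma auxA'' (u : ℝ) (hu : u ≠ 0) : 1 ≤ Real.sinh u / u := by
  rcases lt_or_gt_of_ne hu with h | h
  · rw [le_div_iff_of_neg h]
    have : Real.sinh u < u := Real.sinh_lt_self_iff.mpr h
    linarith
  · rw [le_div_iff₀ h]
    have : u < Real.sinh u := Real.self_lt_sinh_iff.mpr h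
    linarith

-- the key identity
lemma key_id (t : ℝ) (ht : t ≠ 0) :
    (Real.exp t - 1) / t = Real.exp (t / 2) * (Real.sinh (t / 2) / (t / 2)) := by
  rw [Real.sinh_eq]
  have h : Real.exp (t / 2) * Real.exp (-(t / 2)) = 1 := by
    rw [← Real.exp_add]; simp
  have h2 : Real.exp (t / 2) * Real.exp (t / 2) = Real.exp t := by
    rw [← Real.exp_add]; ring_nf
  have h3 : Real.exp (t / 2) * ((Real.exp (t / 2) - Real.exp (-(t / 2))) / 2 / (t / 2)) =
      (Real.exp (t / 2) * Real.exp (t / 2) - Real.exp (t / 2) * Real.exp (-(t / 2))) / t := by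
    field_simp
  rw [h3, h2, h]

lemma L_pos_arg (t : ℝ) (ht : t ≠ 0) : 0 < (Real.exp t - 1) / t := by
  rcases lt_or_gt_of_ne ht with h | h
  · apply div_pos_of_neg_of_neg _ h
    have : Real.exp t < 1 := by rw [← Real.exp_zero]; exact Real.exp_lt_exp.mpr h
    linarith
  · apply div_pos _ h
    have : 1 < Real.exp t := by rw [← Real.exp_zero]; exact Real.exp_lt_exp.mpr h
    linarith

lemma L_eq (t : ℝ) (ht : t ≠ 0) :
    L t = t / 2 + Real.log (Real.sinh (t / 2) / (t / 2)) := by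
  have h2 : t / 2 ≠ 0 := by simpa using ht
  rw [L, if_neg ht, key_id t ht, Real.log_mul (Real.exp_ne_zero _)
    (by linarith [auxA'' (t/2) h2]), Real.log_exp]

lemma L_ge (t : ℝ) : t / 2 ≤ L t := by
  rcases eq_or_ne t 0 with h | h
  · simp [h, L]
  · rw [L_eq t h]
    have h2 : t / 2 ≠ 0 := by simpa using h
    have := Real.log_nonneg (auxA'' (t/2) h2)
    linarith

lemma L_le (t : ℝ) : L t ≤ t / 2 + t ^ 2 / 8 := by
  rcases eq_or_ne t 0 with h | h
  · simp [h, L]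
  · rw [L_eq t h]
    have h2 : t / 2 ≠ 0 := by simpa using h
    have h3 : Real.log (Real.sinh (t / 2) / (t / 2)) ≤ Real.log (Real.cosh (t / 2)) :=
      Real.log_le_log (by linarith [auxA'' (t/2) h2]) (auxA' (t/2) h2)
    have h4 := auxB (t / 2)
    have : (t / 2) ^ 2 / 2 = t ^ 2 / 8 := by ring
    linarith

lemma L_neg (t : ℝ) (ht : t < 0) : L t < 0 := by
  rw [L, if_neg (ne_of_lt ht)]
  apply Real.log_neg (L_pos_arg t (ne_of_lt ht))
  rw [div_lt_one_of_neg ht]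
  have := Real.add_one_lt_exp (ne_of_lt ht)
  linarith

lemma L_lt_self (t : ℝ) (ht : 0 < t) : L t < t := by
  rw [L, if_neg (ne_of_gt ht)]
  have harg : (Real.exp t - 1) / t < Real.exp t := by
    rw [div_lt_iff₀ ht]
    have h5 : -t + 1 < Real.exp (-t) := Real.add_one_lt_exp (by intro hc; exact (ne_of_gt ht) (by linarith [neg_eq_zero.mp hc]))
    have h6 := mul_lt_mul_of_pos_right h5 (Real.exp_pos t)
    rw [← Real.exp_add] at h6
    simp only [neg_add_cancel, Real.exp_zero] at h6
    nlinarith [Real.exp_pos t]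
  calc Real.log ((Real.exp t - 1) / t) < Real.log (Real.exp t) :=
        Real.log_lt_log (L_pos_arg t (ne_of_gt ht)) harg
    _ = t := Real.log_exp t

lemma L_neg_arg (t : ℝ) : L (-t) = L t - t := by
  rcases eq_or_ne t 0 with h | h
  · simp [h, L]
  · have hnt : -t ≠ 0 := neg_ne_zero.mpr h
    rw [L, L, if_neg hnt, if_neg h]
    have h1 : Real.exp (-t) * Real.exp t = 1 := by rw [← Real.exp_add]; simp
    have : (Real.exp (-t) - 1) / (-t) = Real.exp (-t) * ((Real.exp t - 1) / t) := by
      have h4 : Real.exp (-t) * ((Real.exp t - 1) / t) =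
          (Real.exp (-t) * Real.exp t - Real.exp (-t)) / t := by ring
      rw [h4, h1, div_neg, ← neg_div]
      ring_nf
    rw [this, Real.log_mul (Real.exp_ne_zero _) (ne_of_gt (L_pos_arg t h)), Real.log_exp]
    ring

lemma Irate_symm (x : ℝ) : Irate x = Irate (1 - x) := by
  unfold Irate
  rw [← (Equiv.neg ℝ).iSup_comp (g := fun t : ℝ => (((1 - x) * t - L t : ℝ) : EReal))]
  apply iSup_congr
  intro t
  congr 1
  simp only [Equiv.neg_apply]
  rw [L_neg_arg]
  ring

theorem stmt_6 :
    (∀ x : ℝ, Irate x = Irate (1 - x)) ∧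
    Irate (1 / 2) = 0 ∧
    (∀ x : ℝ, x ≠ 1 / 2 → 0 < Irate x) ∧
    (∀ x : ℝ, (x < 0 ∨ 1 < x) → Irate x = ⊤) := by
  have hhalf : Irate (1 / 2) = 0 := by
    apply le_antisymm
    · apply iSup_le
      intro t
      have : (1 / 2 : ℝ) * t - L t ≤ 0 := by linarith [L_ge t]
      exact_mod_cast EReal.coe_le_coe_iff.mpr this
    · have h0 : ((((1:ℝ)/2) * 0 - L 0 : ℝ) : EReal) ≤ Irate (1 / 2) :=
        le_iSup (fun t : ℝ => ((((1:ℝ)/2) * t - L t : ℝ) : EReal)) 0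
      simpa [L] using h0
  have hpos_big : ∀ x : ℝ, 1 / 2 < x → 0 < Irate x := by
    intro x hx
    set t : ℝ := 4 * (x - 1 / 2) with htdef
    have hval : 0 < x * t - L t := by
      nlinarith [L_le t, sq_nonneg (x - 1 / 2)]
    have hle : ((x * t - L t : ℝ) : EReal) ≤ Irate x :=
      le_iSup (fun s : ℝ => ((x * s - L s : ℝ) : EReal)) t
    calc (0 : EReal) < ((x * t - L t : ℝ) : EReal) := by exact_mod_cast hval
      _ ≤ Irate x := hle
  refine ⟨Irate_symm, hhalf, ?_, ?_⟩
  · intro x hx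
    rcases lt_or_gt_of_ne hx with h | h
    · rw [Irate_symm x]
      exact hpos_big (1 - x) (by linarith)
    · exact hpos_big x h
  · intro x hx
    rw [Irate, iSup_eq_top]
    intro b hb
    obtain ⟨r, hbr, _⟩ := EReal.exists_between_coe_real hb
    rcases hx with h | h
    · -- x < 0, take t very negative
      set t : ℝ := min (-1) ((r + 1) / x) with htdef
      have ht0 : t < 0 := lt_of_le_of_lt (min_le_left _ _) (by norm_num)
      have hxt : r < x * t := by
        have h1 : t ≤ (r + 1) / x := min_le_right _ _
        have : (r + 1) / x * x = r + 1 := div_mul_cancel₀ _ (ne_of_lt h)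
        nlinarith
      have : r < x * t - L t := by linarith [L_neg t ht0]
      exact ⟨t, lt_trans hbr (by exact_mod_cast this)⟩
    · -- x > 1, take t large
      set t : ℝ := max 1 ((r + 1) / (x - 1)) with htdef
      have ht0 : 0 < t := lt_of_lt_of_le one_pos (le_max_left _ _)
      have hxt : r < (x - 1) * t := by
        have h1 : (r + 1) / (x - 1) ≤ t := le_max_right _ _
        have hx1 : 0 < x - 1 := by linarith
        have : (r + 1) / (x - 1) * (x - 1) = r + 1 := div_mul_cancel₀ _ (ne_of_gt hx1)
        nlinarith
      have : r < x * t - L t := by nlinarith [L_lt_self t ht0]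
      exact ⟨t, lt_trans hbr (by exact_mod_cast this)⟩
end

section
/- Let t > 0. For all v ∈ [−π, π], Re(L(t+iv) − L(t)) ≤ −λ_t v²/2 where λ_t = t² L''(t)/(t² + π²) and L(z) = log((e^z − 1)/z) denotes the principal branch. -/
/-- Complex version `L(z) = log((e^z - 1)/z)` (principal branch). -/
noncomputable def Lc (z : ℂ) : ℂ := Complex.log ((Complex.exp z - 1) / z)

lemma exp_sub_one_pos' {s : ℝ} (hs : 0 < s) : 0 < Real.exp s - 1 := by
  have := Real.add_one_lt_exp (ne_of_gt hs); linarith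

lemma deriv_L_eq {s : ℝ} (hs : 0 < s) :
    deriv L s = Real.exp s / (Real.exp s - 1) - 1 / s := by
  have hev : L =ᶠ[nhds s] fun x => Real.log (Real.exp x - 1) - Real.log x := by
    filter_upwards [Ioi_mem_nhds hs] with x hx
    have hx0 : (0:ℝ) < x := hx
    have hD := exp_sub_one_pos' hx0
    simp only [L, if_neg (ne_of_gt hx0)]
    rw [Real.log_div (ne_of_gt hD) (ne_of_gt hx0)]
  rw [hev.deriv_eq]
  have hD := exp_sub_one_pos' hs
  have hexp : HasDerivAt (fun x => Real.exp x - 1) (Real.exp s) s :=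
    (Real.hasDerivAt_exp s).sub_const 1
  have hlog : HasDerivAt Real.log (1/s) s := by
    simpa [one_div] using Real.hasDerivAt_log (ne_of_gt hs)
  have h1 := (hexp.log (ne_of_gt hD)).sub hlog
  exact (show HasDerivAt (fun x => Real.log (Real.exp x - 1) - Real.log x) _ s from h1).deriv

lemma deriv2_L_eq {t : ℝ} (ht : 0 < t) :
    deriv (deriv L) t = 1 / t ^ 2 - Real.exp t / (Real.exp t - 1) ^ 2 := by
  have hev : deriv L =ᶠ[nhds t] fun s => Real.exp s / (Real.exp s - 1) - 1 / s := by
    filter_upwards [Ioi_mem_nhds ht] with x hx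
    exact deriv_L_eq hx
  rw [hev.deriv_eq]
  have hD := exp_sub_one_pos' ht
  have hexp := Real.hasDerivAt_exp t
  have hden : HasDerivAt (fun x => Real.exp x - 1) (Real.exp t) t := hexp.sub_const 1
  have hdiv : HasDerivAt (fun x => Real.exp x / (Real.exp x - 1))
      ((Real.exp t * (Real.exp t - 1) - Real.exp t * Real.exp t) / (Real.exp t - 1)^2) t :=
    hexp.div hden (ne_of_gt hD)
  have hinv : HasDerivAt (fun x : ℝ => 1 / x) (-(1 / t ^ 2)) t := by
    have := hasDerivAt_inv (ne_of_gt ht)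
    simpa [one_div] using this
  rw [(show HasDerivAt (fun s => Real.exp s / (Real.exp s - 1) - 1 / s) _ t from hdiv.sub hinv).deriv]
  field_simp
  ring

/-- `(e^t - 1)^2 > t^2 e^t` for `t > 0`. -/
lemma sq_gt_aux {t : ℝ} (ht : 0 < t) : Real.exp t * t ^ 2 < (Real.exp t - 1) ^ 2 := by
  set s := Real.exp (t / 2) with hs
  have hs0 : 0 < s := Real.exp_pos _
  have hss : s * s = Real.exp t := by rw [hs, ← Real.exp_add]; norm_num
  have hsinh : t / 2 < Real.sinh (t / 2) := Real.self_lt_sinh_iff.mpr (by linarith)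
  have hq : Real.exp (-(t / 2)) = 1 / s := by rw [Real.exp_neg, hs, one_div]
  rw [Real.sinh_eq, hq] at hsinh
  have h2 : t * s < s * s - 1 := by
    have h3 := mul_lt_mul_of_pos_right hsinh hs0
    have h4 : (s - 1 / s) / 2 * s = (s * s - 1) / 2 := by field_simp
    rw [h4] at h3
    linarith
  have h5 : 0 < t * s := mul_pos ht hs0
  rw [← hss]
  nlinarith [h2, h5]

/-- Core real inequality. -/
lemma core_ineq {t v E N M : ℝ} (ht : 0 < t) (hE1 : 1 < E)
    (hv1 : -Real.pi ≤ v) (hv2 : v ≤ Real.pi)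
    (hNeq : N = (E - 1) ^ 2 + 2 * E * (1 - Real.cos v)) (hM : M = t ^ 2 + v ^ 2)
    (hc1 : E * t ^ 2 < (E - 1) ^ 2) :
    Real.log (N * t ^ 2 / ((E - 1) ^ 2 * M)) ≤
      -(((E - 1) ^ 2 - E * t ^ 2) * v ^ 2) / ((E - 1) ^ 2 * (t ^ 2 + Real.pi ^ 2)) := by
  have hπ := Real.pi_pos
  have hD : 0 < E - 1 := by linarith
  have hcos : 1 - v ^ 2 / 2 ≤ Real.cos v := Real.one_sub_sq_div_two_le_cos
  have hcos1 : Real.cos v ≤ 1 := Real.cos_le_one v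
  have hE0 : (0:ℝ) < E := by linarith
  have hNpos : 0 < N := by rw [hNeq]; nlinarith
  have hMpos : 0 < M := by rw [hM]; positivity
  have hvsq : v ^ 2 ≤ Real.pi ^ 2 := by nlinarith
  set X : ℝ := N * t ^ 2 / ((E - 1) ^ 2 * M) with hX
  have hXpos : 0 < X := by rw [hX]; positivity
  have hlog := Real.log_le_sub_one_of_pos hXpos
  have hNle : N * t ^ 2 ≤ (E - 1) ^ 2 * t ^ 2 + E * t ^ 2 * v ^ 2 := by
    rw [hNeq]; nlinarith [mul_le_mul_of_nonneg_left (by linarith : 2 * (1 - Real.cos v) ≤ v ^ 2)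
      (le_of_lt (mul_pos hE0 (mul_pos ht ht)))]
  have hXm1 : X - 1 ≤ -(((E - 1) ^ 2 - E * t ^ 2) * v ^ 2) / ((E - 1) ^ 2 * (t ^ 2 + Real.pi ^ 2)) := by
    have e1 : X - 1 = (N * t ^ 2 - (E - 1) ^ 2 * M) / ((E - 1) ^ 2 * M) := by
      rw [hX]; field_simp
    rw [e1, div_le_div_iff₀ (by positivity) (by positivity)]
    have h1 : N * t ^ 2 - (E - 1) ^ 2 * M ≤ -(((E - 1) ^ 2 - E * t ^ 2) * v ^ 2) := by
      rw [hM]; nlinarith [hNle]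
    have hK : 0 ≤ ((E - 1) ^ 2 - E * t ^ 2) * v ^ 2 := mul_nonneg (by linarith) (sq_nonneg v)
    have hMle : (E - 1) ^ 2 * M ≤ (E - 1) ^ 2 * (t ^ 2 + Real.pi ^ 2) := by
      have hm : M ≤ t ^ 2 + Real.pi ^ 2 := by rw [hM]; linarith
      exact mul_le_mul_of_nonneg_left hm (by positivity)
    calc (N * t ^ 2 - (E - 1) ^ 2 * M) * ((E - 1) ^ 2 * (t ^ 2 + Real.pi ^ 2))
        ≤ (-(((E - 1) ^ 2 - E * t ^ 2) * v ^ 2)) * ((E - 1) ^ 2 * (t ^ 2 + Real.pi ^ 2)) :=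
          mul_le_mul_of_nonneg_right h1 (by positivity)
      _ ≤ (-(((E - 1) ^ 2 - E * t ^ 2) * v ^ 2)) * ((E - 1) ^ 2 * M) :=
          mul_le_mul_of_nonpos_left hMle (by linarith)
  linarith

set_option maxHeartbeats 1000000 in
theorem stmt_8 (t : ℝ) (ht : 0 < t) (v : ℝ) (hv : v ∈ Set.Icc (-Real.pi) Real.pi) :
    (Lc (t + v * Complex.I) - Lc t).re ≤
      -(t ^ 2 * deriv (deriv L) t / (t ^ 2 + Real.pi ^ 2)) * v ^ 2 / 2 := by
  obtain ⟨hv1, hv2⟩ := hv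
  have hπ := Real.pi_pos
  set E := Real.exp t with hE
  have hE1 : 1 < E := by
    have := Real.add_one_lt_exp (ne_of_gt ht); simp only [hE]; linarith
  have hD : 0 < E - 1 := by linarith
  have hzne : (↑t + ↑v * Complex.I : ℂ) ≠ 0 := by
    intro h
    have : t = 0 := by simpa using congrArg Complex.re h
    exact ht.ne' this
  have habsexp : ‖Complex.exp (↑t + ↑v * Complex.I)‖ = E := by
    rw [Complex.norm_exp]; simp [hE]
  have hAne : (Complex.exp (↑t + ↑v * Complex.I) - 1) ≠ 0 := by
    intro h
    rw [sub_eq_zero] at h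
    rw [h] at habsexp
    simp at habsexp
    linarith
  set a := ‖Complex.exp (↑t + ↑v * Complex.I) - 1‖ with ha
  set b := ‖(↑t + ↑v * Complex.I : ℂ)‖ with hb
  have hapos : 0 < a := norm_pos_iff.mpr hAne
  have hbpos : 0 < b := norm_pos_iff.mpr hzne
  set N : ℝ := (E * Real.cos v - 1) ^ 2 + (E * Real.sin v) ^ 2 with hN
  set M : ℝ := t ^ 2 + v ^ 2 with hM
  have h1 := Real.sin_sq_add_cos_sq v
  have hNeq : N = (E - 1) ^ 2 + 2 * E * (1 - Real.cos v) := by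
    rw [hN]; linear_combination E ^ 2 * h1
  have hNpos : 0 < N := by
    rw [hNeq]
    have h2 : Real.cos v ≤ 1 := Real.cos_le_one v
    nlinarith
  have hMpos : 0 < M := by rw [hM]; positivity
  have ha2 : a ^ 2 = N := by
    rw [ha, Complex.sq_norm, Complex.normSq_apply]
    simp [Complex.exp_re, Complex.exp_im, hE]
    ring
  have hb2 : b ^ 2 = M := by
    rw [hb, Complex.sq_norm, Complex.normSq_apply]
    simp [hM]
    ring
  have hloga : Real.log a = Real.log N / 2 := by
    rw [← ha2, Real.log_pow]; push_cast; ring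
  have hlogb : Real.log b = Real.log M / 2 := by
    rw [← hb2, Real.log_pow]; push_cast; ring
  have hre1 : (Lc (↑t + ↑v * Complex.I)).re = Real.log a - Real.log b := by
    rw [Lc, Complex.log_re, norm_div, Real.log_div (ne_of_gt hapos) (ne_of_gt hbpos)]
  have hre2 : (Lc ↑t).re = Real.log (E - 1) - Real.log t := by
    have hc1' : ‖Complex.exp ↑t - 1‖ = E - 1 := by
      rw [← Complex.ofReal_exp, ← Complex.ofReal_one, ← Complex.ofReal_sub,
        Complex.norm_real, Real.norm_eq_abs, abs_of_pos hD]
    have hc2' : ‖(↑t : ℂ)‖ = t := by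
      rw [Complex.norm_real, Real.norm_eq_abs, abs_of_pos ht]
    rw [Lc, Complex.log_re, norm_div, hc1', hc2',
      Real.log_div (ne_of_gt hD) (ne_of_gt ht)]
  have hLHS : (Lc (↑t + ↑v * Complex.I) - Lc ↑t).re
      = Real.log N / 2 - Real.log M / 2 - Real.log (E - 1) + Real.log t := by
    rw [Complex.sub_re, hre1, hre2, hloga, hlogb]; ring
  have hlogX : Real.log (N * t ^ 2 / ((E - 1) ^ 2 * M))
      = Real.log N + 2 * Real.log t - 2 * Real.log (E - 1) - Real.log M := by
    rw [Real.log_div (by positivity) (by positivity),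
      Real.log_mul (by positivity) (by positivity),
      Real.log_mul (by positivity) (by positivity), Real.log_pow, Real.log_pow]
    push_cast; ring
  have hc1 : E * t ^ 2 < (E - 1) ^ 2 := by
    have := sq_gt_aux ht; rw [← hE] at this; linarith [this]
  have hkey := core_ineq ht hE1 hv1 hv2 hNeq hM hc1
  rw [hlogX] at hkey
  have hRHS : -(t ^ 2 * (1 / t ^ 2 - E / (E - 1) ^ 2) / (t ^ 2 + Real.pi ^ 2)) * v ^ 2 / 2
      = (-(((E - 1) ^ 2 - E * t ^ 2) * v ^ 2) / ((E - 1) ^ 2 * (t ^ 2 + Real.pi ^ 2))) / 2 := by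
    field_simp
  rw [hLHS, deriv2_L_eq ht, ← hE, hRHS]
  linarith
end

section
/- For every n ≥ 1 and every real t > 0, there is a constant C_t (independent of n) such that for all v ∈ [−π, π], |r_n(t+iv)| ≤ C_t · |(t+iv)/(t+i(2π−|v|))|^{n+1} ≤ C_t, where r_n(z) = Σ_{ℓ ∈ ℤ, ℓ≠0} (1 + 2πiℓ/z)^{−(n+1)}. -/
/-- `r_n(z) = ∑_{ℓ ∈ ℤ, ℓ ≠ 0} (1 + 2πiℓ/z)^{-(n+1)}`. -/
noncomputable def rfn (n : ℕ) (z : ℂ) : ℂ :=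
  ∑' ℓ : ℤ, if ℓ = 0 then 0
    else ((1 + (2 * Real.pi * Complex.I * ℓ) / z) ^ (n + 1))⁻¹

set_option maxHeartbeats 1000000 in
theorem stmt_9 (t : ℝ) (ht : 0 < t) :
    ∃ C : ℝ, 0 ≤ C ∧ ∀ n : ℕ, 1 ≤ n → ∀ v ∈ Set.Icc (-Real.pi) Real.pi,
      ‖rfn n (t + v * Complex.I)‖ ≤
          C * ‖(t + v * Complex.I) / (t + (2 * Real.pi - |v|) * Complex.I)‖ ^ (n + 1)
        ∧
      C * ‖(t + v * Complex.I) / (t + (2 * Real.pi - |v|) * Complex.I)‖ ^ (n + 1)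
        ≤ C := by
  have hπ : 0 < Real.pi := Real.pi_pos
  set π := Real.pi with hπdef
  set K : ℝ := (t ^ 2 + 4 * π ^ 2) / π ^ 2 with hK
  have hK0 : 0 ≤ K := by positivity
  have hS : Summable (fun ℓ : ℤ => 1 / (ℓ : ℝ) ^ 2) :=
    Real.summable_one_div_int_pow.mpr one_lt_two
  set S : ℝ := ∑' ℓ : ℤ, 1 / (ℓ : ℝ) ^ 2 with hSdef
  have hS0 : 0 ≤ S := tsum_nonneg fun ℓ => by positivity
  refine ⟨K * S, mul_nonneg hK0 hS0, fun n hn v hv => ?_⟩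
  obtain ⟨hv1, hv2⟩ := hv
  have hvabs : |v| ≤ π := abs_le.mpr ⟨hv1, hv2⟩
  set a : ℝ := |v| with ha
  have ha0 : 0 ≤ a := by rw [ha]; exact abs_nonneg v
  have hav : a ^ 2 = v ^ 2 := by rw [ha]; exact sq_abs v
  set z : ℂ := (t : ℂ) + v * Complex.I with hz
  set A : ℝ := Real.sqrt (t ^ 2 + v ^ 2) with hA
  set W : ℝ := Real.sqrt (t ^ 2 + (2 * π - a) ^ 2) with hW
  have hAz : ‖z‖ = A := by
    rw [hz, Complex.norm_add_mul_I, hA]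
  have hA0 : 0 ≤ A := Real.sqrt_nonneg _
  have hWpos : 0 < W := Real.sqrt_pos.mpr (by nlinarith)
  have hρA : ‖z / ((t : ℂ) + (2 * (π : ℂ) - (a : ℂ)) * Complex.I)‖ = A / W := by
    rw [show ((t : ℂ) + (2 * (π : ℂ) - (a : ℂ)) * Complex.I) =
        (t : ℂ) + ((2 * π - a : ℝ) : ℂ) * Complex.I from by push_cast; ring,
      norm_div, hAz, Complex.norm_add_mul_I, hW]
  have hAW : A ≤ W := by
    apply Real.sqrt_le_sqrt
    nlinarith
  have hz0 : z ≠ 0 := by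
    intro h
    have hre : z.re = t := by rw [hz]; simp
    rw [h] at hre
    simp at hre
    linarith
  -- per-term bound
  have hterm : ∀ ℓ : ℤ,
      ‖(if ℓ = 0 then (0 : ℂ)
        else ((1 + (2 * π * Complex.I * ℓ) / z) ^ (n + 1))⁻¹)‖ ≤
      (A / W) ^ (n + 1) * (K * (1 / (ℓ : ℝ) ^ 2)) := by
    intro ℓ
    rcases eq_or_ne ℓ 0 with h0 | h0
    · simp [h0]
    · rw [if_neg h0]
      have hl0 : ((ℓ : ℝ)) ≠ 0 := Int.cast_ne_zero.mpr h0
      set B : ℝ := Real.sqrt (t ^ 2 + (v + 2 * π * ℓ) ^ 2) with hB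
      have hBpos : 0 < B := Real.sqrt_pos.mpr (by positivity)
      have hL1 : (1 : ℝ) ≤ |(ℓ : ℝ)| := by
        rw [← Int.cast_abs]
        exact_mod_cast Int.one_le_abs h0
      have hπL : π ≤ π * |(ℓ : ℝ)| := by
        nlinarith [abs_nonneg ((ℓ : ℝ))]
      have htri : 2 * π * |(ℓ : ℝ)| - a ≤ |v + 2 * π * ℓ| := by
        have h := abs_sub_abs_le_abs_sub (2 * π * (ℓ : ℝ)) (-v)
        rw [abs_neg, sub_neg_eq_add, abs_mul,
          abs_of_nonneg (by positivity : (0:ℝ) ≤ 2 * π), add_comm] at h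
        rw [ha]
        linarith
      have h2 : 2 * π - a ≤ |v + 2 * π * ℓ| := by linarith
      have h3 : π * |(ℓ : ℝ)| ≤ |v + 2 * π * ℓ| := by linarith
      have hsq1 : (2 * π - a) ^ 2 ≤ (v + 2 * π * ℓ) ^ 2 := by
        have := pow_le_pow_left₀ (by linarith) h2 2
        rwa [sq_abs] at this
      have hsq2 : π ^ 2 * (ℓ : ℝ) ^ 2 ≤ (v + 2 * π * ℓ) ^ 2 := by
        have := pow_le_pow_left₀ (by positivity) h3 2
        rwa [mul_pow, sq_abs, sq_abs] at this
      have hWB : W ≤ B := Real.sqrt_le_sqrt (by nlinarith)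
      have hsum : (1 : ℂ) + (2 * π * Complex.I * ℓ) / z =
          (z + 2 * π * Complex.I * ℓ) / z := by
        rw [eq_div_iff hz0, add_mul, one_mul, div_mul_cancel₀ _ hz0]
      have hzw : z + 2 * (π : ℂ) * Complex.I * ℓ =
          (t : ℂ) + ((v + 2 * π * ℓ : ℝ) : ℂ) * Complex.I := by
        rw [hz]; push_cast; ring
      have hnorm : ‖((1 + (2 * π * Complex.I * ℓ) / z) ^ (n + 1))⁻¹‖ = (A / B) ^ (n + 1) := by
        rw [hsum, norm_inv, norm_pow, norm_div, hzw]
        rw [Complex.norm_add_mul_I, hAz, ← hB, ← inv_pow, inv_div]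
      rw [hnorm]
      have hAB : A / B = (A / W) * (W / B) := by
        rw [div_mul_div_comm, mul_comm A W, mul_div_mul_left A B hWpos.ne']
      rw [hAB, mul_pow]
      apply mul_le_mul_of_nonneg_left _ (by positivity)
      have hWB1 : W / B ≤ 1 := div_le_one_of_le₀ hWB hBpos.le
      have hWB0 : 0 ≤ W / B := by positivity
      calc (W / B) ^ (n + 1) ≤ (W / B) ^ 2 :=
            pow_le_pow_of_le_one hWB0 hWB1 (by omega)
        _ = W ^ 2 / B ^ 2 := div_pow W B 2
        _ ≤ (t ^ 2 + 4 * π ^ 2) / (π ^ 2 * (ℓ : ℝ) ^ 2) := by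
            apply div_le_div₀ (by positivity) _ (by positivity) _
            · rw [hW, Real.sq_sqrt (by positivity)]
              nlinarith
            · rw [hB, Real.sq_sqrt (by positivity)]
              nlinarith [sq_nonneg t]
        _ = K * (1 / (ℓ : ℝ) ^ 2) := by
            rw [hK, div_mul_div_comm, mul_one]
  -- summability
  have hSb : Summable (fun ℓ : ℤ => (A / W) ^ (n + 1) * (K * (1 / (ℓ : ℝ) ^ 2))) :=
    (hS.mul_left K).mul_left _
  have hSnorm : Summable (fun ℓ : ℤ => ‖(if ℓ = 0 then (0 : ℂ)
      else ((1 + (2 * π * Complex.I * ℓ) / z) ^ (n + 1))⁻¹)‖) :=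
    Summable.of_nonneg_of_le (fun ℓ => norm_nonneg _) hterm hSb
  have hrfn : rfn n z = ∑' ℓ : ℤ, (if ℓ = 0 then (0 : ℂ)
      else ((1 + (2 * π * Complex.I * ℓ) / z) ^ (n + 1))⁻¹) := rfl
  have hmain : ‖rfn n z‖ ≤ K * S * (A / W) ^ (n + 1) := by
    rw [hrfn]
    calc ‖∑' ℓ : ℤ, (if ℓ = 0 then (0 : ℂ)
          else ((1 + (2 * π * Complex.I * ℓ) / z) ^ (n + 1))⁻¹)‖
        ≤ ∑' ℓ : ℤ, ‖(if ℓ = 0 then (0 : ℂ)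
          else ((1 + (2 * π * Complex.I * ℓ) / z) ^ (n + 1))⁻¹)‖ :=
          norm_tsum_le_tsum_norm hSnorm
      _ ≤ ∑' ℓ : ℤ, (A / W) ^ (n + 1) * (K * (1 / (ℓ : ℝ) ^ 2)) :=
          Summable.tsum_le_tsum hterm hSnorm hSb
      _ = (A / W) ^ (n + 1) * (K * S) := by
          rw [tsum_mul_left, tsum_mul_left]
      _ = K * S * (A / W) ^ (n + 1) := by ring
  rw [hρA]
  have hρ1 : A / W ≤ 1 := div_le_one_of_le₀ hAW hWpos.le
  have hρ0 : 0 ≤ A / W := by positivity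
  refine ⟨hmain, ?_⟩
  calc K * S * (A / W) ^ (n + 1) ≤ K * S * 1 :=
        mul_le_mul_of_nonneg_left (pow_le_one₀ hρ0 hρ1) (mul_nonneg hK0 hS0)
    _ = K * S := mul_one _
end

section
/- For a uniform random permutation π_{n+1} of size n+1 built by inserting a uniform point into the graphical representation of a uniform π_n of size n, the number of insertion cells (out of (n+1)²) which simultaneously increase the descent count and the inverse-descent count by 1 equals (n−D_n)(n−D'_n)+n; the number increasing only the descent count equals (n−D_n)(D'_n+1)−n; only the inverse-descent count: (D_n+1)(n−D'_n)−n; neither: (D_n+1)(D'_n+1)+n. Here D_n, D'_n are the numbers of descents of π_n and π_n^{-1}. -/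
set_option maxHeartbeats 1600000

/-- Number of descents of a permutation of `Fin n`. -/
def descNum {n : ℕ} (σ : Equiv.Perm (Fin n)) : ℕ :=
  (Finset.univ.filter fun p : Fin n × Fin n =>
    (p.1 : ℕ) + 1 = (p.2 : ℕ) ∧ σ p.2 < σ p.1).card

/-- Insertion of a point in cell `(k, ℓ)` of the graphical representation of `σ`:
the new permutation sends `k ↦ ℓ` and otherwise acts as `σ` on the remaining
positions/values (via `succAbove`). -/
def insertPerm {n : ℕ} (σ : Equiv.Perm (Fin n)) (k ℓ : Fin (n + 1)) :
    Equiv.Perm (Fin (n + 1)) :=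
  (finSuccEquiv' k).trans ((Equiv.optionCongr σ).trans (finSuccEquiv' ℓ).symm)

def dI {m : ℕ} (π : Equiv.Perm (Fin m)) (j : ℕ) : ℤ :=
  if h : j + 1 < m then (if π ⟨j+1, h⟩ < π ⟨j, Nat.lt_of_succ_lt h⟩ then 1 else 0) else 0


lemma dI_pos {m : ℕ} (π : Equiv.Perm (Fin m)) (j : ℕ) (h : j + 1 < m) (h' : j < m) :
    dI π j = if π ⟨j+1, h⟩ < π ⟨j, h'⟩ then 1 else 0 := by
  rw [dI, dif_pos h]


def aext {n : ℕ} (σ : Equiv.Perm (Fin n)) (j : ℕ) : ℤ :=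
  if j = 0 then (n : ℤ) else if h : j - 1 < n then ((σ ⟨j - 1, h⟩ : ℕ) : ℤ) else -1


def FF {n : ℕ} (σ : Equiv.Perm (Fin n)) (k ℓ : ℕ) : ℤ :=
  (if aext σ (k+1) < aext σ k then 0 else 1)
  + (if (ℓ : ℤ) ≤ aext σ k then 1 else 0)
  - (if (ℓ : ℤ) ≤ aext σ (k+1) then 1 else 0)


lemma aext_zero {n : ℕ} (σ : Equiv.Perm (Fin n)) : aext σ 0 = n := by simp [aext]


lemma aext_succ {n : ℕ} (σ : Equiv.Perm (Fin n)) (j : ℕ) (h : j < n) :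
    aext σ (j + 1) = ((σ ⟨j, h⟩ : ℕ) : ℤ) := by
  simp [aext, h]


lemma aext_last {n : ℕ} (σ : Equiv.Perm (Fin n)) : aext σ (n + 1) = -1 := by
  simp [aext]


lemma aext_nonneg {n : ℕ} (σ : Equiv.Perm (Fin n)) (j : ℕ) (h : j ≤ n) :
    0 ≤ aext σ j ∧ aext σ j ≤ n := by
  rcases Nat.eq_or_lt_of_le (Nat.zero_le j) with h0 | h0
  · rw [← h0, aext_zero]; exact ⟨Int.natCast_nonneg n, le_refl _⟩
  · obtain ⟨j, rfl⟩ : ∃ m, j = m + 1 := ⟨j - 1, by omega⟩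
    rw [aext_succ σ j (by omega)]
    have := (σ ⟨j, by omega⟩).isLt
    constructor <;> [positivity; exact_mod_cast this.le]


lemma aext_inv {n : ℕ} (σ : Equiv.Perm (Fin n)) (ℓ : ℕ) (h : ℓ ≤ n) :
    aext σ ((aext σ⁻¹ ℓ).toNat + 1) = (ℓ : ℤ) - 1 := by
  rcases Nat.eq_zero_or_pos ℓ with rfl | hl
  · rw [aext_zero, show ((n:ℤ)).toNat = n from Int.toNat_natCast n, aext_last]
    simp
  · obtain ⟨m, rfl⟩ : ∃ m, ℓ = m + 1 := ⟨ℓ - 1, by omega⟩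
    have hm : m < n := by omega
    rw [aext_succ σ⁻¹ m hm, Int.toNat_natCast,
      aext_succ σ _ (σ⁻¹ ⟨m, hm⟩).isLt]
    simp only [Fin.eta, Equiv.Perm.inv_def, Equiv.apply_symm_apply]
    push_cast; ring


lemma FF_mem {n : ℕ} (σ : Equiv.Perm (Fin n)) (k ℓ : ℕ) :
    FF σ k ℓ = 0 ∨ FF σ k ℓ = 1 := by
  unfold FF
  split_ifs <;> omega

lemma descNum_eq_sum {m : ℕ} (π : Equiv.Perm (Fin m)) :
    (descNum π : ℤ) = ∑ j ∈ Finset.range m, dI π j := by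
  rw [descNum, Finset.card_filter, ← Fin.sum_univ_eq_sum_range (fun j => dI π j) m]
  push_cast
  rw [← Finset.univ_product_univ, Finset.sum_product]
  refine Finset.sum_congr rfl fun a _ => ?_
  by_cases h : (a : ℕ) + 1 < m
  · rw [Finset.sum_eq_single (⟨(a : ℕ) + 1, h⟩ : Fin m)]
    · simp only [dI, dif_pos h, Fin.eta]
      simp
    · intro b _ hb
      rw [if_neg]
      rintro ⟨h1, -⟩
      exact hb (Fin.ext h1.symm)
    · simp
  · rw [Finset.sum_eq_zero, dI, dif_neg h]
    intro b _
    rw [if_neg]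
    rintro ⟨h1, -⟩
    exact h (h1 ▸ b.isLt)

lemma insertPerm_inv {n : ℕ} (σ : Equiv.Perm (Fin n)) (k ℓ : Fin (n + 1)) :
    (insertPerm σ k ℓ)⁻¹ = insertPerm σ⁻¹ ℓ k := by
  show (insertPerm σ k ℓ).symm = _
  ext x
  simp [insertPerm, Equiv.symm_trans_apply, Equiv.optionCongr_symm]
  rfl


lemma insertPerm_self {n : ℕ} (σ : Equiv.Perm (Fin n)) (k ℓ : Fin (n + 1)) :
    insertPerm σ k ℓ k = ℓ := by
  simp [insertPerm]


lemma insertPerm_succAbove {n : ℕ} (σ : Equiv.Perm (Fin n)) (k ℓ : Fin (n + 1)) (i : Fin n) :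
    insertPerm σ k ℓ (k.succAbove i) = ℓ.succAbove (σ i) := by
  simp [insertPerm, finSuccEquiv'_succAbove, finSuccEquiv'_symm_some]


lemma insertPerm_lt {n : ℕ} (σ : Equiv.Perm (Fin n)) (k ℓ : Fin (n + 1)) (j : ℕ)
    (hj : j < (k : ℕ)) (h1 : j < n + 1) (h2 : j < n) :
    insertPerm σ k ℓ ⟨j, h1⟩ = ℓ.succAbove (σ ⟨j, h2⟩) := by
  have hjn : j < n := h2
  have : (⟨j, h1⟩ : Fin (n+1)) = k.succAbove ⟨j, hjn⟩ := by
    rw [Fin.succAbove_of_castSucc_lt]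
    · rfl
    · rw [Fin.lt_def]; exact hj
  rw [this, insertPerm_succAbove]


lemma insertPerm_gt {n : ℕ} (σ : Equiv.Perm (Fin n)) (k ℓ : Fin (n + 1)) (j : ℕ)
    (hj : (k : ℕ) < j) (hjn : j ≤ n) (h1 : j < n + 1) (h2 : j - 1 < n) :
    insertPerm σ k ℓ ⟨j, h1⟩ = ℓ.succAbove (σ ⟨j - 1, h2⟩) := by
  have : (⟨j, h1⟩ : Fin (n+1)) = k.succAbove ⟨j - 1, by omega⟩ := by
    rw [Fin.succAbove_of_le_castSucc]
    · exact Fin.ext (by simp [Fin.succ]; omega)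
    · rw [Fin.le_def]; simpa using by omega
  rw [this, insertPerm_succAbove]


lemma descNum_insertPerm {n : ℕ} (hn : 1 ≤ n) (σ : Equiv.Perm (Fin n)) (k ℓ : Fin (n + 1)) :
    (descNum (insertPerm σ k ℓ) : ℤ) = (descNum σ : ℤ) + FF σ (k : ℕ) (ℓ : ℕ) := by
  have hkn : (k : ℕ) ≤ n := by have := k.isLt; omega
  have hln : (ℓ : ℕ) ≤ n := by have := ℓ.isLt; omega
  rw [descNum_eq_sum, descNum_eq_sum]
  set τ := insertPerm σ k ℓ with hτ
  have h1 : ∀ j, j + 1 < (k : ℕ) → dI τ j = dI σ j := by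
    intro j hj
    have hj1 : j + 1 < n := by omega
    rw [dI, dI, dif_pos (by omega : j + 1 < n + 1), dif_pos hj1, hτ,
      insertPerm_lt σ k ℓ j (by omega) (by omega) (by omega),
      insertPerm_lt σ k ℓ (j+1) (by omega) (by omega) (by omega)]
    simp only [Fin.succAbove_lt_succAbove_iff]
  have h4 : ∀ j, (k : ℕ) < j → j ≤ n → dI τ j = dI σ (j - 1) := by
    intro j hj hjn
    rcases Nat.lt_or_ge j n with hlt | hge
    · rw [dI, dI, dif_pos (by omega : j + 1 < n + 1), dif_pos (by omega : (j-1) + 1 < n), hτ,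
        insertPerm_gt σ k ℓ j hj hjn (by omega) (by omega),
        insertPerm_gt σ k ℓ (j+1) (by omega) (by omega) (by omega) (by omega)]
      simp only [Fin.succAbove_lt_succAbove_iff]
      have e1 : (⟨j + 1 - 1, by omega⟩ : Fin n) = (⟨(j-1)+1, by omega⟩ : Fin n) :=
        Fin.ext (by simp; omega)
      rw [e1]
    · have hjn' : j = n := by omega
      rw [dI, dI, dif_neg (by omega), dif_neg (by omega)]
  rcases Nat.eq_zero_or_pos (k : ℕ) with hK0 | hK1
  · -- k = 0
    have pk0 : ∀ h : (0:ℕ) < n + 1, (⟨0, h⟩ : Fin (n+1)) = k := fun h => Fin.ext (by simp [hK0])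
    have hz : (0:ℕ) < n := by omega
    have e0 : dI τ 0 = FF σ (k : ℕ) (ℓ : ℕ) := by
      rw [dI_pos τ 0 (by omega) (by omega), hτ]
      simp only [Nat.zero_add]
      rw [pk0, insertPerm_self, insertPerm_gt σ k ℓ 1 (by omega) (by omega) (by omega) hz]
      simp only [Fin.succAbove_lt_iff_castSucc_lt]
      simp only [Fin.lt_def, Fin.coe_castSucc]
      rw [FF, hK0, aext_zero, aext_succ σ 0 hz]
      have hb := (σ ⟨1 - 1, by omega⟩).isLt
      have e1 : (⟨1 - 1, by omega⟩ : Fin n) = (⟨0, hz⟩ : Fin n) := Fin.ext (by simp)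
      rw [e1] at hb ⊢
      split_ifs <;> omega
    rw [Finset.sum_range_succ']
    have hc : ∀ j ∈ Finset.range n, dI τ (j + 1) = dI σ j := by
      intro j hj
      rw [Finset.mem_range] at hj
      have := h4 (j+1) (by omega) (by omega)
      simpa using this
    rw [Finset.sum_congr rfl hc, e0]
    try ring
  · -- 1 ≤ k
    obtain ⟨K', hK'⟩ : ∃ m, (k : ℕ) = m + 1 := ⟨(k:ℕ) - 1, by omega⟩
    have hK'n : K' < n := by omega
    have pk : ∀ h : K' + 1 < n + 1, (⟨K' + 1, h⟩ : Fin (n+1)) = k :=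
      fun h => Fin.ext (by simp [hK'])
    have eA : dI τ K' = if (ℓ : ℤ) ≤ aext σ (K' + 1) then 1 else 0 := by
      rw [dI_pos τ K' (by omega) (by omega), hτ, pk, insertPerm_self,
        insertPerm_lt σ k ℓ K' (by omega) (by omega) hK'n]
      simp only [Fin.lt_succAbove_iff_le_castSucc, Fin.le_def, Fin.coe_castSucc]
      rw [aext_succ σ K' hK'n]
      split_ifs <;> omega
    have eB : dI τ (K' + 1) =
        if K' + 1 < n then (if aext σ (K' + 2) < ((ℓ : ℕ) : ℤ) then 1 else 0) else 0 := by
      rcases Nat.lt_or_ge (K' + 1) n with hc | hc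
      · have hc2 : K' + 1 + 1 - 1 < n := by omega
        rw [if_pos hc, dI_pos τ (K' + 1) (by omega) (by omega), hτ, pk, insertPerm_self,
          insertPerm_gt σ k ℓ (K' + 1 + 1) (by omega) (by omega) (by omega) hc2]
        simp only [Fin.succAbove_lt_iff_castSucc_lt]
        simp only [Fin.lt_def, Fin.coe_castSucc]
        have ha : aext σ (K' + 2) = ((σ ⟨K' + 1, hc⟩ : ℕ) : ℤ) := by
          rw [show K' + 2 = K' + 1 + 1 by omega]; exact aext_succ σ (K' + 1) hc
        rw [ha]
        have e1 : (⟨K' + 1 + 1 - 1, hc2⟩ : Fin n) = (⟨K' + 1, hc⟩ : Fin n) :=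
          Fin.ext (by simp)
        rw [e1]
        split_ifs <;> omega
      · rw [if_neg (by omega), dI, dif_neg (by omega)]
    have hfin : dI τ K' + dI τ (K' + 1) = dI σ K' + FF σ (K' + 1) (ℓ : ℕ) := by
      rw [eA, eB, FF, aext_succ σ K' hK'n]
      rcases Nat.lt_or_ge (K' + 1) n with hc | hc
      · have ha : aext σ (K' + 1 + 1) = ((σ ⟨K' + 1, hc⟩ : ℕ) : ℤ) := aext_succ σ (K' + 1) hc
        rw [if_pos hc, dI_pos σ K' hc hK'n, ha]
        simp only [Fin.lt_def]
        split_ifs <;> omega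
      · have hceq : K' + 1 = n := by omega
        have ha : aext σ (K' + 1 + 1) = -1 := by rw [hceq]; exact aext_last σ
        rw [if_neg (show ¬ (K' + 1 < n) by omega), dI, dif_neg (by omega), ha]
        have h1 := Int.natCast_nonneg ((σ ⟨K', hK'n⟩ : ℕ))
        split_ifs <;> omega
    have split1 : ∑ j ∈ Finset.range (n+1), dI τ j
        = (∑ j ∈ Finset.range K', dI σ j) + dI τ K' + dI τ (K' + 1)
          + ∑ j ∈ Finset.Ico (K' + 1) n, dI σ j := by
      rw [Finset.range_eq_Ico,
        ← Finset.sum_Ico_consecutive _ (Nat.zero_le (K' + 1)) (by omega : K' + 1 ≤ n + 1),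
        Finset.sum_Ico_succ_top (Nat.zero_le K'),
        Finset.sum_eq_sum_Ico_succ_bot (show K' + 1 < n + 1 by omega)]
      have c1 : ∑ j ∈ Finset.Ico 0 K', dI τ j = ∑ j ∈ Finset.range K', dI σ j := by
        rw [← Finset.range_eq_Ico]
        exact Finset.sum_congr rfl fun j hj => h1 j (by rw [Finset.mem_range] at hj; omega)
      have c2 : ∑ j ∈ Finset.Ico (K' + 1 + 1) (n + 1), dI τ j
          = ∑ j ∈ Finset.Ico (K' + 1) n, dI σ j := by
        rw [Finset.sum_Ico_eq_sum_range, Finset.sum_Ico_eq_sum_range,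
          show n + 1 - (K' + 1 + 1) = n - (K' + 1) from by omega]
        refine Finset.sum_congr rfl fun i hi => ?_
        rw [Finset.mem_range] at hi
        rw [h4 (K' + 1 + 1 + i) (by omega) (by omega)]
        congr 1
        omega
      rw [c1, c2]
      ring
    have split2 : ∑ j ∈ Finset.range n, dI σ j
        = (∑ j ∈ Finset.range K', dI σ j) + dI σ K' + ∑ j ∈ Finset.Ico (K' + 1) n, dI σ j := by
      rw [Finset.range_eq_Ico,
        ← Finset.sum_Ico_consecutive _ (Nat.zero_le (K' + 1)) (by omega : K' + 1 ≤ n),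
        Finset.sum_Ico_succ_top (Nat.zero_le K'), ← Finset.range_eq_Ico]
    rw [split1, split2, hK']
    linarith [hfin]

lemma sumIte (g : ℕ → ℤ) (t M : ℕ) (h : t ≤ M) :
    ∑ k ∈ Finset.range M, (if k < t then g k else 0) = ∑ k ∈ Finset.range t, g k := by
  induction M with
  | zero => interval_cases t; simp
  | succ M ih =>
    rcases Nat.lt_or_ge t (M + 1) with h' | h'
    · rw [Finset.sum_range_succ, if_neg (by omega), add_zero, ih (by omega)]
    · have ht : t = M + 1 := by omega
      subst ht
      rw [Finset.sum_range_succ, if_pos (by omega), Finset.sum_range_succ]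
      congr 1
      exact Finset.sum_congr rfl fun j hj => if_pos (by rw [Finset.mem_range] at hj; omega)


lemma hsum (U : ℕ → ℤ) (t n : ℕ) (ht : t ≤ n + 1) :
    ∑ k ∈ Finset.range (n+1), (U k - U (k+1)) * (if k < t then 1 else 0) = U 0 - U t := by
  have hc : ∀ k ∈ Finset.range (n+1), (U k - U (k+1)) * (if k < t then 1 else 0)
      = if k < t then U k - U (k+1) else 0 := by
    intro k _; split_ifs <;> ring
  rw [Finset.sum_congr rfl hc, sumIte _ t _ ht, Finset.sum_range_sub' U t]


lemma sum_B {n : ℕ} (hn : 1 ≤ n) (σ : Equiv.Perm (Fin n)) :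
    ∑ k ∈ Finset.range (n+1), (if aext σ (k+1) < aext σ k then (1:ℤ) else 0)
      = (descNum σ : ℤ) + 2 := by
  obtain ⟨m, rfl⟩ : ∃ m, n = m + 1 := ⟨n - 1, by omega⟩
  rw [Finset.sum_range_succ, Finset.sum_range_succ']
  have t0 : (if aext σ (0+1) < aext σ 0 then (1:ℤ) else 0) = 1 := by
    rw [if_pos]
    rw [aext_zero, aext_succ σ 0 (by omega)]
    have := (σ ⟨0, by omega⟩).isLt
    exact_mod_cast this
  have tlast : (if aext σ (m+1+1) < aext σ (m+1) then (1:ℤ) else 0) = 1 := by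
    rw [if_pos]
    rw [aext_last, aext_succ σ m (by omega)]
    have := Int.natCast_nonneg ((σ ⟨m, by omega⟩ : ℕ))
    omega
  rw [t0, tlast, descNum_eq_sum]
  rw [Finset.sum_range_succ, dI, dif_neg (by omega), add_zero]
  have hmid : ∀ i ∈ Finset.range m,
      (if aext σ (i+1+1) < aext σ (i+1) then (1:ℤ) else 0) = dI σ i := by
    intro i hi
    rw [Finset.mem_range] at hi
    have h1 : i < m + 1 := by omega
    have h2 : i + 1 < m + 1 := by omega
    rw [aext_succ σ i h1, aext_succ σ (i+1) h2, dI, dif_pos (by omega : i + 1 < m + 1)]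
    simp only [Fin.lt_def]
    split_ifs <;> try rfl
    all_goals omega
  rw [Finset.sum_congr rfl hmid]
  ring


lemma row_sum {n : ℕ} (hn : 1 ≤ n) (σ : Equiv.Perm (Fin n)) (ℓ : ℕ) (hl : ℓ ≤ n) :
    ∑ k ∈ Finset.range (n+1), FF σ k ℓ = (n : ℤ) - descNum σ := by
  have hptw : ∀ k ∈ Finset.range (n+1), FF σ k ℓ
      = (1 - (if aext σ (k+1) < aext σ k then (1:ℤ) else 0))
        + ((if (ℓ : ℤ) ≤ aext σ k then (1:ℤ) else 0) - (if (ℓ : ℤ) ≤ aext σ (k+1) then 1 else 0)) := by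
    intro k _
    rw [FF]
    split_ifs <;> ring
  rw [Finset.sum_congr rfl hptw, Finset.sum_add_distrib, Finset.sum_sub_distrib,
    Finset.sum_const, Finset.card_range, sum_B hn σ,
    Finset.sum_range_sub' (fun k => (if (ℓ : ℤ) ≤ aext σ k then (1:ℤ) else 0)) (n+1)]
  rw [aext_zero, aext_last, if_pos (by exact_mod_cast hl), if_neg (by omega)]
  push_cast
  ring


lemma Aell {n : ℕ} (hn : 1 ≤ n) (σ : Equiv.Perm (Fin n)) (ℓ : ℕ) (hl : ℓ ≤ n) :
    ∑ k ∈ Finset.range (n+1),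
      ((if (ℓ : ℤ) ≤ aext σ k then (1:ℤ) else 0) - (if (ℓ : ℤ) ≤ aext σ (k+1) then 1 else 0))
      * ((if (k : ℤ) ≤ aext σ⁻¹ ℓ then (1:ℤ) else 0) - (if (k : ℤ) ≤ aext σ⁻¹ (ℓ+1) then 1 else 0))
      = 1 := by
  set U : ℕ → ℤ := fun k => if (ℓ : ℤ) ≤ aext σ k then (1:ℤ) else 0 with hU
  obtain ⟨hp0, hpn⟩ := aext_nonneg σ⁻¹ ℓ hl
  set p : ℤ := aext σ⁻¹ ℓ with hp
  set q : ℤ := aext σ⁻¹ (ℓ+1) with hq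
  have hq1 : -1 ≤ q ∧ q ≤ n := by
    rcases Nat.lt_or_ge ℓ n with hc | hc
    · obtain ⟨h1, h2⟩ := aext_nonneg σ⁻¹ (ℓ+1) (by omega)
      constructor <;> omega
    · have : ℓ = n := by omega
      rw [hq, this, aext_last]
      constructor <;> omega
  set tp : ℕ := p.toNat + 1 with htp
  set tq : ℕ := (q + 1).toNat with htq
  have hptw : ∀ k ∈ Finset.range (n+1),
      (U k - U (k+1)) * ((if (k : ℤ) ≤ p then (1:ℤ) else 0) - (if (k : ℤ) ≤ q then 1 else 0))
      = (U k - U (k+1)) * (if k < tp then (1:ℤ) else 0)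
        - (U k - U (k+1)) * (if k < tq then (1:ℤ) else 0) := by
    intro k _
    have e1 : (if (k : ℤ) ≤ p then (1:ℤ) else 0) = (if k < tp then (1:ℤ) else 0) := by
      split_ifs <;> omega
    have e2 : (if (k : ℤ) ≤ q then (1:ℤ) else 0) = (if k < tq then (1:ℤ) else 0) := by
      split_ifs <;> omega
    rw [e1, e2]; ring
  rw [Finset.sum_congr rfl hptw, Finset.sum_sub_distrib,
    hsum U tp n (by omega), hsum U tq n (by omega)]
  have hUtp : U tp = 0 := by
    rw [hU]
    simp only
    rw [htp, hp, aext_inv σ ℓ hl, if_neg (by omega)]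
  have hUtq : U tq = 1 := by
    rcases Nat.lt_or_ge ℓ n with hc | hc
    · have hq0 : 0 ≤ q := (aext_nonneg σ⁻¹ (ℓ+1) (by omega)).1
      have : tq = q.toNat + 1 := by omega
      rw [hU]; simp only
      rw [this, hq, aext_inv σ (ℓ+1) (by omega), if_pos (by push_cast; omega)]
    · have hln : ℓ = n := by omega
      have hqm : q = -1 := by rw [hq, hln]; exact aext_last σ⁻¹
      have : tq = 0 := by omega
      rw [hU]; simp only
      rw [this, aext_zero, if_pos (by exact_mod_cast hl)]
  rw [hUtp, hUtq]
  ring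


def Gf {n : ℕ} (σ : Equiv.Perm (Fin n)) (k : ℕ) : ℤ :=
  1 - (if aext σ (k+1) < aext σ k then (1:ℤ) else 0)


def Uf {n : ℕ} (σ : Equiv.Perm (Fin n)) (m j : ℕ) : ℤ :=
  if (m : ℤ) ≤ aext σ j then 1 else 0


lemma FF_decomp {n : ℕ} (σ : Equiv.Perm (Fin n)) (k ℓ : ℕ) :
    FF σ k ℓ = Gf σ k + (Uf σ ℓ k - Uf σ ℓ (k+1)) := by
  unfold FF Gf Uf
  split_ifs <;> ring


lemma sum_G {n : ℕ} (hn : 1 ≤ n) (σ : Equiv.Perm (Fin n)) :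
    ∑ k ∈ Finset.range (n+1), Gf σ k = (n : ℤ) - 1 - descNum σ := by
  unfold Gf
  rw [Finset.sum_sub_distrib, Finset.sum_const, Finset.card_range, sum_B hn σ]
  push_cast; ring


lemma Uf_tel {n : ℕ} (σ : Equiv.Perm (Fin n)) (m : ℕ) (hm : m ≤ n) :
    ∑ j ∈ Finset.range (n+1), (Uf σ m j - Uf σ m (j+1)) = 1 := by
  rw [Finset.sum_range_sub' (fun j => Uf σ m j) (n+1)]
  unfold Uf
  rw [aext_zero, aext_last, if_pos (by exact_mod_cast hm), if_neg (by omega)]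
  ring




lemma Aell' {n : ℕ} (hn : 1 ≤ n) (σ : Equiv.Perm (Fin n)) (ℓ : ℕ) (hl : ℓ ≤ n) :
    ∑ k ∈ Finset.range (n+1),
      (Uf σ ℓ k - Uf σ ℓ (k+1)) * (Uf σ⁻¹ k ℓ - Uf σ⁻¹ k (ℓ+1)) = 1 := by
  have := Aell hn σ ℓ hl
  unfold Uf
  convert this using 2


lemma Sff {n : ℕ} (hn : 1 ≤ n) (σ : Equiv.Perm (Fin n)) :
    ∑ k ∈ Finset.range (n+1), ∑ ℓ ∈ Finset.range (n+1), FF σ k ℓ * FF σ⁻¹ ℓ k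
      = ((n : ℤ) - descNum σ) * ((n : ℤ) - descNum σ⁻¹) + n := by
  have key : ∀ k ∈ Finset.range (n+1), ∀ ℓ ∈ Finset.range (n+1),
      FF σ k ℓ * FF σ⁻¹ ℓ k
      = Gf σ k * Gf σ⁻¹ ℓ + Gf σ k * (Uf σ⁻¹ k ℓ - Uf σ⁻¹ k (ℓ+1))
        + (Uf σ ℓ k - Uf σ ℓ (k+1)) * Gf σ⁻¹ ℓ
        + (Uf σ ℓ k - Uf σ ℓ (k+1)) * (Uf σ⁻¹ k ℓ - Uf σ⁻¹ k (ℓ+1)) := by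
    intro k _ ℓ _
    rw [FF_decomp σ k ℓ, FF_decomp σ⁻¹ ℓ k]
    ring
  have hA : ∑ k ∈ Finset.range (n+1), ∑ ℓ ∈ Finset.range (n+1), Gf σ k * Gf σ⁻¹ ℓ
      = ((n : ℤ) - 1 - descNum σ) * ((n : ℤ) - 1 - descNum σ⁻¹) := by
    have h1 : ∀ k ∈ Finset.range (n+1), ∑ ℓ ∈ Finset.range (n+1), Gf σ k * Gf σ⁻¹ ℓ
        = Gf σ k * ((n : ℤ) - 1 - descNum σ⁻¹) := by
      intro k _
      rw [← Finset.mul_sum, sum_G hn σ⁻¹]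
    rw [Finset.sum_congr rfl h1, ← Finset.sum_mul, sum_G hn σ]
  have hB : ∑ k ∈ Finset.range (n+1), ∑ ℓ ∈ Finset.range (n+1),
      Gf σ k * (Uf σ⁻¹ k ℓ - Uf σ⁻¹ k (ℓ+1)) = (n : ℤ) - 1 - descNum σ := by
    have h1 : ∀ k ∈ Finset.range (n+1), ∑ ℓ ∈ Finset.range (n+1),
        Gf σ k * (Uf σ⁻¹ k ℓ - Uf σ⁻¹ k (ℓ+1)) = Gf σ k := by
      intro k hk
      rw [Finset.mem_range] at hk
      rw [← Finset.mul_sum, Uf_tel σ⁻¹ k (by omega), mul_one]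
    rw [Finset.sum_congr rfl h1, sum_G hn σ]
  have hC : ∑ k ∈ Finset.range (n+1), ∑ ℓ ∈ Finset.range (n+1),
      (Uf σ ℓ k - Uf σ ℓ (k+1)) * Gf σ⁻¹ ℓ = (n : ℤ) - 1 - descNum σ⁻¹ := by
    rw [Finset.sum_comm]
    have h1 : ∀ ℓ ∈ Finset.range (n+1), ∑ k ∈ Finset.range (n+1),
        (Uf σ ℓ k - Uf σ ℓ (k+1)) * Gf σ⁻¹ ℓ = Gf σ⁻¹ ℓ := by
      intro ℓ hl
      rw [Finset.mem_range] at hl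
      rw [← Finset.sum_mul, Uf_tel σ ℓ (by omega), one_mul]
    rw [Finset.sum_congr rfl h1, sum_G hn σ⁻¹]
  have hD : ∑ k ∈ Finset.range (n+1), ∑ ℓ ∈ Finset.range (n+1),
      (Uf σ ℓ k - Uf σ ℓ (k+1)) * (Uf σ⁻¹ k ℓ - Uf σ⁻¹ k (ℓ+1)) = (n : ℤ) + 1 := by
    rw [Finset.sum_comm]
    have h1 : ∀ ℓ ∈ Finset.range (n+1), ∑ k ∈ Finset.range (n+1),
        (Uf σ ℓ k - Uf σ ℓ (k+1)) * (Uf σ⁻¹ k ℓ - Uf σ⁻¹ k (ℓ+1)) = 1 := by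
      intro ℓ hl
      rw [Finset.mem_range] at hl
      exact Aell' hn σ ℓ (by omega)
    rw [Finset.sum_congr rfl h1, Finset.sum_const, Finset.card_range]
    push_cast; ring
  calc ∑ k ∈ Finset.range (n+1), ∑ ℓ ∈ Finset.range (n+1), FF σ k ℓ * FF σ⁻¹ ℓ k
      = ∑ k ∈ Finset.range (n+1), ∑ ℓ ∈ Finset.range (n+1),
        (Gf σ k * Gf σ⁻¹ ℓ + Gf σ k * (Uf σ⁻¹ k ℓ - Uf σ⁻¹ k (ℓ+1))
        + (Uf σ ℓ k - Uf σ ℓ (k+1)) * Gf σ⁻¹ ℓ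
        + (Uf σ ℓ k - Uf σ ℓ (k+1)) * (Uf σ⁻¹ k ℓ - Uf σ⁻¹ k (ℓ+1))) := by
        exact Finset.sum_congr rfl fun k hk => Finset.sum_congr rfl fun ℓ hl => key k hk ℓ hl
    _ = _ := by
        simp only [Finset.sum_add_distrib]
        rw [hA, hB, hC, hD]
        ring


lemma SfL {n : ℕ} (hn : 1 ≤ n) (σ : Equiv.Perm (Fin n)) :
    ∑ k ∈ Finset.range (n+1), ∑ ℓ ∈ Finset.range (n+1), FF σ k ℓ
      = ((n : ℤ) + 1) * ((n : ℤ) - descNum σ) := by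
  rw [Finset.sum_comm]
  have h1 : ∀ ℓ ∈ Finset.range (n+1), ∑ k ∈ Finset.range (n+1), FF σ k ℓ
      = (n : ℤ) - descNum σ := by
    intro ℓ hl
    rw [Finset.mem_range] at hl
    exact row_sum hn σ ℓ (by omega)
  rw [Finset.sum_congr rfl h1, Finset.sum_const, Finset.card_range]
  push_cast; ring


lemma SfR {n : ℕ} (hn : 1 ≤ n) (σ : Equiv.Perm (Fin n)) :
    ∑ k ∈ Finset.range (n+1), ∑ ℓ ∈ Finset.range (n+1), FF σ⁻¹ ℓ k
      = ((n : ℤ) + 1) * ((n : ℤ) - descNum σ⁻¹) := by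
  have h1 : ∀ k ∈ Finset.range (n+1), ∑ ℓ ∈ Finset.range (n+1), FF σ⁻¹ ℓ k
      = (n : ℤ) - descNum σ⁻¹ := by
    intro k hk
    rw [Finset.mem_range] at hk
    exact row_sum hn σ⁻¹ k (by omega)
  rw [Finset.sum_congr rfl h1, Finset.sum_const, Finset.card_range]
  push_cast; ring


theorem stmt_11 (n : ℕ) (σ : Equiv.Perm (Fin n)) :
    ((Finset.univ.filter fun c : Fin (n + 1) × Fin (n + 1) =>
        descNum (insertPerm σ c.1 c.2) = descNum σ + 1 ∧
        descNum (insertPerm σ c.1 c.2)⁻¹ = descNum σ⁻¹ + 1).card : ℤ) =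
      ((n : ℤ) - descNum σ) * ((n : ℤ) - descNum σ⁻¹) + n ∧
    ((Finset.univ.filter fun c : Fin (n + 1) × Fin (n + 1) =>
        descNum (insertPerm σ c.1 c.2) = descNum σ + 1 ∧
        descNum (insertPerm σ c.1 c.2)⁻¹ = descNum σ⁻¹).card : ℤ) =
      ((n : ℤ) - descNum σ) * ((descNum σ⁻¹ : ℤ) + 1) - n ∧
    ((Finset.univ.filter fun c : Fin (n + 1) × Fin (n + 1) =>
        descNum (insertPerm σ c.1 c.2) = descNum σ ∧
        descNum (insertPerm σ c.1 c.2)⁻¹ = descNum σ⁻¹ + 1).card : ℤ) =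
      ((descNum σ : ℤ) + 1) * ((n : ℤ) - descNum σ⁻¹) - n ∧
    ((Finset.univ.filter fun c : Fin (n + 1) × Fin (n + 1) =>
        descNum (insertPerm σ c.1 c.2) = descNum σ ∧
        descNum (insertPerm σ c.1 c.2)⁻¹ = descNum σ⁻¹).card : ℤ) =
      ((descNum σ : ℤ) + 1) * ((descNum σ⁻¹ : ℤ) + 1) + n := by
  rcases Nat.eq_zero_or_pos n with rfl | hn
  · -- n = 0 : everything is trivial
    have hσ : σ = 1 := by
      ext i
      exact absurd i.isLt (by omega)
    subst hσ
    decide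
  · -- main case n ≥ 1
    have hins : ∀ k ℓ : Fin (n+1),
        (descNum (insertPerm σ k ℓ) : ℤ) = descNum σ + FF σ (k : ℕ) (ℓ : ℕ) :=
      fun k ℓ => descNum_insertPerm hn σ k ℓ
    have hinv : ∀ k ℓ : Fin (n+1),
        (descNum (insertPerm σ k ℓ)⁻¹ : ℤ) = descNum σ⁻¹ + FF σ⁻¹ (ℓ : ℕ) (k : ℕ) := by
      intro k ℓ
      rw [insertPerm_inv]
      exact descNum_insertPerm hn σ⁻¹ ℓ k
    -- card-to-sum conversion
    have cardsum : ∀ (P : Fin (n+1) × Fin (n+1) → Prop) (_ : DecidablePred P)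
        (f : ℕ → ℕ → ℤ),
        (∀ c : Fin (n+1) × Fin (n+1), (if P c then (1:ℤ) else 0) = f (c.1 : ℕ) (c.2 : ℕ)) →
        ((Finset.univ.filter P).card : ℤ)
          = ∑ k ∈ Finset.range (n+1), ∑ ℓ ∈ Finset.range (n+1), f k ℓ := by
      intro P hP f hf
      rw [Finset.card_filter]
      push_cast
      rw [Fintype.sum_prod_type (f := fun c : Fin (n+1) × Fin (n+1) => if P c then (1:ℤ) else 0)]
      rw [← Fin.sum_univ_eq_sum_range (fun k => ∑ ℓ ∈ Finset.range (n+1), f k ℓ) (n+1)]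
      refine Finset.sum_congr rfl fun k _ => ?_
      rw [← Fin.sum_univ_eq_sum_range (fun ℓ => f (k : ℕ) ℓ) (n+1)]
      exact Finset.sum_congr rfl fun ℓ _ => hf (k, ℓ)
    refine ⟨?_, ?_, ?_, ?_⟩
    · refine Eq.trans (cardsum _ inferInstance (fun k ℓ => FF σ k ℓ * FF σ⁻¹ ℓ k) ?_) ?_
      · intro c
        beta_reduce
        have h1 := hins c.1 c.2
        have h2 := hinv c.1 c.2
        rcases FF_mem σ (c.1 : ℕ) (c.2 : ℕ) with hf | hf <;>
          rcases FF_mem σ⁻¹ (c.2 : ℕ) (c.1 : ℕ) with hg | hg <;>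
          simp only [hf, hg] at h1 h2 ⊢ <;> split_ifs with h <;> push_cast <;> omega
      · rw [Sff hn σ]
    · refine Eq.trans (cardsum _ inferInstance
          (fun k ℓ => FF σ k ℓ - FF σ k ℓ * FF σ⁻¹ ℓ k) ?_) ?_
      · intro c
        beta_reduce
        have h1 := hins c.1 c.2
        have h2 := hinv c.1 c.2
        rcases FF_mem σ (c.1 : ℕ) (c.2 : ℕ) with hf | hf <;>
          rcases FF_mem σ⁻¹ (c.2 : ℕ) (c.1 : ℕ) with hg | hg <;>
          simp only [hf, hg] at h1 h2 ⊢ <;> split_ifs with h <;> push_cast <;> omega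
      · simp only [Finset.sum_sub_distrib]
        rw [SfL hn σ, Sff hn σ]
        ring
    · refine Eq.trans (cardsum _ inferInstance
          (fun k ℓ => FF σ⁻¹ ℓ k - FF σ k ℓ * FF σ⁻¹ ℓ k) ?_) ?_
      · intro c
        beta_reduce
        have h1 := hins c.1 c.2
        have h2 := hinv c.1 c.2
        rcases FF_mem σ (c.1 : ℕ) (c.2 : ℕ) with hf | hf <;>
          rcases FF_mem σ⁻¹ (c.2 : ℕ) (c.1 : ℕ) with hg | hg <;>
          simp only [hf, hg] at h1 h2 ⊢ <;> split_ifs with h <;> push_cast <;> omega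
      · simp only [Finset.sum_sub_distrib]
        rw [SfR hn σ, Sff hn σ]
        ring
    · refine Eq.trans (cardsum _ inferInstance
          (fun k ℓ => (1 : ℤ) - FF σ k ℓ - FF σ⁻¹ ℓ k + FF σ k ℓ * FF σ⁻¹ ℓ k) ?_) ?_
      · intro c
        beta_reduce
        have h1 := hins c.1 c.2
        have h2 := hinv c.1 c.2
        rcases FF_mem σ (c.1 : ℕ) (c.2 : ℕ) with hf | hf <;>
          rcases FF_mem σ⁻¹ (c.2 : ℕ) (c.1 : ℕ) with hg | hg <;>
          simp only [hf, hg] at h1 h2 ⊢ <;> split_ifs with h <;> push_cast <;> omega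
      · simp only [Finset.sum_add_distrib, Finset.sum_sub_distrib]
        rw [SfL hn σ, SfR hn σ, Sff hn σ]
        simp only [Finset.sum_const, Finset.card_range, nsmul_eq_mul]
        push_cast
        ring
end

section
/- In the insertion model for random permutations, the conditional covariance of the increments satisfies E[ΔD_{n+1} ΔD'_{n+1} | F_n] − E[ΔD_{n+1} | F_n]·E[ΔD'_{n+1} | F_n] = n/(n+1)², where ΔD_{n+1} = D_{n+1} − D_n and ΔD'_{n+1} = D'_{n+1} − D'_n. -/
open Finset

namespace Aux15

variable {n : ℕ}

lemma val_succAbove (k : Fin (n+1)) (i : Fin n) :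
    ((k.succAbove i : Fin (n+1)) : ℕ) = if (i:ℕ) < (k:ℕ) then (i:ℕ) else (i:ℕ)+1 := by
  rcases lt_or_ge ((i:ℕ)) ((k:ℕ)) with h | h
  · rw [if_pos h, Fin.succAbove_of_castSucc_lt _ _ (by simpa [Fin.lt_def] using h)]
    simp
  · rw [if_neg (not_lt.2 h), Fin.succAbove_of_le_castSucc _ _ (by simpa [Fin.le_def] using h)]
    simp

lemma insertPerm_apply_self (σ : Equiv.Perm (Fin n)) (k ℓ : Fin (n+1)) :
    insertPerm σ k ℓ k = ℓ := by
  simp [insertPerm]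

lemma insertPerm_apply_succAbove (σ : Equiv.Perm (Fin n)) (k ℓ : Fin (n+1)) (i : Fin n) :
    insertPerm σ k ℓ (k.succAbove i) = ℓ.succAbove (σ i) := by
  simp [insertPerm]

lemma insertPerm_inv (σ : Equiv.Perm (Fin n)) (k ℓ : Fin (n+1)) :
    (insertPerm σ k ℓ)⁻¹ = insertPerm σ⁻¹ ℓ k := by
  ext x
  simp [insertPerm, Equiv.Perm.inv_def, Equiv.symm_trans_apply, Equiv.optionCongr_symm]


lemma descNum_eq_sum (m : ℕ) (τ : Equiv.Perm (Fin m)) :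
    (descNum τ : ℝ) =
      ∑ u : Fin m, ∑ v : Fin m,
        if ((u:ℕ)+1 = (v:ℕ) ∧ (τ v:ℕ) < (τ u:ℕ)) then (1:ℝ) else 0 := by
  rw [descNum, Finset.card_filter, Nat.cast_sum, Fintype.sum_prod_type]
  refine Finset.sum_congr rfl fun u _ => Finset.sum_congr rfl fun v _ => ?_
  rw [apply_ite (Nat.cast : ℕ → ℝ), Nat.cast_one, Nat.cast_zero]
  exact if_congr (and_congr_right fun _ => Fin.lt_def) rfl rfl

lemma hpin (c : ℕ) (hc : c ≤ n) (P : ℕ → Prop) [DecidablePred P] :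
    ∑ k : Fin (n+1), (if (c = (k:ℕ) ∧ P (k:ℕ)) then (1:ℝ) else 0)
      = if P c then 1 else 0 := by
  rw [Finset.sum_eq_single (⟨c, Nat.lt_succ_of_le hc⟩ : Fin (n+1))]
  · simp
  · intro b _ hb
    rw [if_neg]
    rintro ⟨h1, -⟩
    exact hb (Fin.ext h1.symm)
  · intro h; exact absurd (Finset.mem_univ _) h

lemma split4 (f : Fin (n+1) → Fin (n+1) → ℝ) (k : Fin (n+1)) :
    ∑ u : Fin (n+1), ∑ v : Fin (n+1), f u v
      = f k k + (∑ j : Fin n, f k (k.succAbove j)) + (∑ i : Fin n, f (k.succAbove i) k)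
        + ∑ i : Fin n, ∑ j : Fin n, f (k.succAbove i) (k.succAbove j) := by
  rw [Fin.sum_univ_succAbove (fun u => ∑ v, f u v) k,
      Fin.sum_univ_succAbove (fun v => f k v) k]
  have h : ∀ i : Fin n, ∑ v : Fin (n+1), f (k.succAbove i) v
      = f (k.succAbove i) k + ∑ j : Fin n, f (k.succAbove i) (k.succAbove j) :=
    fun i => Fin.sum_univ_succAbove (fun v => f (k.succAbove i) v) k
  rw [Finset.sum_congr rfl fun i _ => h i, Finset.sum_add_distrib]
  ring

noncomputable def Af (σ : Equiv.Perm (Fin n)) (k ℓ : Fin (n+1)) : ℝ :=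
  ∑ i : Fin n, if ((i:ℕ)+1 = (k:ℕ) ∧ (ℓ:ℕ) ≤ (σ i:ℕ)) then 1 else 0

noncomputable def Bf (σ : Equiv.Perm (Fin n)) (k ℓ : Fin (n+1)) : ℝ :=
  ∑ i : Fin n, if ((i:ℕ) = (k:ℕ) ∧ (σ i:ℕ) < (ℓ:ℕ)) then 1 else 0

noncomputable def Df (σ : Equiv.Perm (Fin n)) (k : Fin (n+1)) : ℝ :=
  ∑ i : Fin n, ∑ j : Fin n,
    if ((j:ℕ) = (k:ℕ) ∧ ((i:ℕ)+1 = (j:ℕ) ∧ (σ j:ℕ) < (σ i:ℕ))) then 1 else 0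


lemma key (σ : Equiv.Perm (Fin n)) (k ℓ : Fin (n+1)) :
    (descNum (insertPerm σ k ℓ) : ℝ) = (descNum σ : ℝ) + Af σ k ℓ + Bf σ k ℓ - Df σ k := by
  rw [descNum_eq_sum (n+1) (insertPerm σ k ℓ)]
  rw [split4 (fun u v => if ((u:ℕ)+1 = (v:ℕ) ∧ ((insertPerm σ k ℓ) v:ℕ) < ((insertPerm σ k ℓ) u:ℕ)) then (1:ℝ) else 0) k]
  simp only [insertPerm_apply_self, insertPerm_apply_succAbove]
  have e0 : (if ((k:ℕ)+1 = (k:ℕ) ∧ (ℓ:ℕ) < (ℓ:ℕ)) then (1:ℝ) else 0) = 0 := by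
    rw [if_neg]; omega
  have eB : (∑ j : Fin n, if ((k:ℕ)+1 = ((k.succAbove j):ℕ) ∧ ((ℓ.succAbove (σ j)):ℕ) < (ℓ:ℕ)) then (1:ℝ) else 0)
      = Bf σ k ℓ := by
    rw [Bf]
    refine Finset.sum_congr rfl fun j _ => if_congr ?_ rfl rfl
    rw [val_succAbove k j, val_succAbove ℓ (σ j)]
    split_ifs <;> omega
  have eA : (∑ i : Fin n, if (((k.succAbove i):ℕ)+1 = (k:ℕ) ∧ (ℓ:ℕ) < ((ℓ.succAbove (σ i)):ℕ)) then (1:ℝ) else 0)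
      = Af σ k ℓ := by
    rw [Af]
    refine Finset.sum_congr rfl fun i _ => if_congr ?_ rfl rfl
    rw [val_succAbove k i, val_succAbove ℓ (σ i)]
    split_ifs <;> omega
  have eD : (∑ i : Fin n, ∑ j : Fin n,
      if (((k.succAbove i):ℕ)+1 = ((k.succAbove j):ℕ) ∧ ((ℓ.succAbove (σ j)):ℕ) < ((ℓ.succAbove (σ i)):ℕ)) then (1:ℝ) else 0)
      = (descNum σ : ℝ) - Df σ k := by
    rw [descNum_eq_sum n σ, Df, ← Finset.sum_sub_distrib]
    refine Finset.sum_congr rfl fun i _ => ?_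
    rw [← Finset.sum_sub_distrib]
    refine Finset.sum_congr rfl fun j _ => ?_
    rw [val_succAbove k i, val_succAbove k j, val_succAbove ℓ (σ j), val_succAbove ℓ (σ i)]
    split_ifs <;> first | (exfalso; omega) | norm_num
  rw [e0, eA, eB, eD]
  ring


lemma val_eq_iff (σ : Equiv.Perm (Fin n)) (a b : Fin n) :
    (σ a : ℕ) = (σ b : ℕ) ↔ (a : ℕ) = (b : ℕ) := by
  rw [Fin.val_eq_val, Fin.val_eq_val, EmbeddingLike.apply_eq_iff_eq]

lemma swap4 (F : Fin (n+1) → Fin (n+1) → Fin n → Fin n → ℝ) :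
    ∑ k : Fin (n+1), ∑ ℓ : Fin (n+1), ∑ i : Fin n, ∑ i' : Fin n, F k ℓ i i'
      = ∑ i : Fin n, ∑ i' : Fin n, ∑ k : Fin (n+1), ∑ ℓ : Fin (n+1), F k ℓ i i' :=
  calc ∑ k : Fin (n+1), ∑ ℓ : Fin (n+1), ∑ i : Fin n, ∑ i' : Fin n, F k ℓ i i'
      = ∑ k : Fin (n+1), ∑ i : Fin n, ∑ ℓ : Fin (n+1), ∑ i' : Fin n, F k ℓ i i' :=
        Finset.sum_congr rfl fun k _ => Finset.sum_comm
    _ = ∑ i : Fin n, ∑ k : Fin (n+1), ∑ ℓ : Fin (n+1), ∑ i' : Fin n, F k ℓ i i' :=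
        Finset.sum_comm
    _ = ∑ i : Fin n, ∑ k : Fin (n+1), ∑ i' : Fin n, ∑ ℓ : Fin (n+1), F k ℓ i i' :=
        Finset.sum_congr rfl fun i _ => Finset.sum_congr rfl fun k _ => Finset.sum_comm
    _ = ∑ i : Fin n, ∑ i' : Fin n, ∑ k : Fin (n+1), ∑ ℓ : Fin (n+1), F k ℓ i i' :=
        Finset.sum_congr rfl fun i _ => Finset.sum_comm

lemma collapse2 (p q : Fin n → ℕ) (hp : ∀ i, p i ≤ n) (hq : ∀ i, q i ≤ n)
    (P Q : Fin n → ℕ → Prop) [∀ i v, Decidable (P i v)] [∀ i v, Decidable (Q i v)] :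
    ∑ k : Fin (n+1), ∑ ℓ : Fin (n+1),
      ((∑ i : Fin n, if (p i = (k:ℕ) ∧ P i (ℓ:ℕ)) then (1:ℝ) else 0) *
       (∑ i' : Fin n, if (q i' = (ℓ:ℕ) ∧ Q i' (k:ℕ)) then (1:ℝ) else 0))
      = ∑ i : Fin n, ∑ i' : Fin n, if (P i (q i') ∧ Q i' (p i)) then (1:ℝ) else 0 := by
  have step1 : ∀ k ℓ : Fin (n+1),
      ((∑ i : Fin n, if (p i = (k:ℕ) ∧ P i (ℓ:ℕ)) then (1:ℝ) else 0) *
       (∑ i' : Fin n, if (q i' = (ℓ:ℕ) ∧ Q i' (k:ℕ)) then (1:ℝ) else 0))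
      = ∑ i : Fin n, ∑ i' : Fin n,
          if ((p i = (k:ℕ) ∧ P i (ℓ:ℕ)) ∧ (q i' = (ℓ:ℕ) ∧ Q i' (k:ℕ))) then (1:ℝ) else 0 := by
    intro k ℓ
    rw [Finset.sum_mul_sum]
    exact Finset.sum_congr rfl fun i _ => Finset.sum_congr rfl fun i' _ => by
      split_ifs <;> first | tauto | norm_num
  calc ∑ k : Fin (n+1), ∑ ℓ : Fin (n+1),
      ((∑ i : Fin n, if (p i = (k:ℕ) ∧ P i (ℓ:ℕ)) then (1:ℝ) else 0) *
       (∑ i' : Fin n, if (q i' = (ℓ:ℕ) ∧ Q i' (k:ℕ)) then (1:ℝ) else 0))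
      = ∑ k : Fin (n+1), ∑ ℓ : Fin (n+1), ∑ i : Fin n, ∑ i' : Fin n,
          if ((p i = (k:ℕ) ∧ P i (ℓ:ℕ)) ∧ (q i' = (ℓ:ℕ) ∧ Q i' (k:ℕ))) then (1:ℝ) else 0 :=
        Finset.sum_congr rfl fun k _ => Finset.sum_congr rfl fun ℓ _ => step1 k ℓ
    _ = ∑ i : Fin n, ∑ i' : Fin n, ∑ k : Fin (n+1), ∑ ℓ : Fin (n+1),
          if ((p i = (k:ℕ) ∧ P i (ℓ:ℕ)) ∧ (q i' = (ℓ:ℕ) ∧ Q i' (k:ℕ))) then (1:ℝ) else 0 :=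
        swap4 _
    _ = ∑ i : Fin n, ∑ i' : Fin n, if (P i (q i') ∧ Q i' (p i)) then (1:ℝ) else 0 := by
        refine Finset.sum_congr rfl fun i _ => Finset.sum_congr rfl fun i' _ => ?_
        calc ∑ k : Fin (n+1), ∑ ℓ : Fin (n+1),
            (if ((p i = (k:ℕ) ∧ P i (ℓ:ℕ)) ∧ (q i' = (ℓ:ℕ) ∧ Q i' (k:ℕ))) then (1:ℝ) else 0)
            = ∑ k : Fin (n+1), ∑ ℓ : Fin (n+1),
              (if (q i' = (ℓ:ℕ) ∧ (p i = (k:ℕ) ∧ P i (ℓ:ℕ) ∧ Q i' (k:ℕ))) then (1:ℝ) else 0) :=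
              Finset.sum_congr rfl fun k _ => Finset.sum_congr rfl fun ℓ _ =>
                if_congr (by tauto) rfl rfl
          _ = ∑ k : Fin (n+1), (if (p i = (k:ℕ) ∧ P i (q i') ∧ Q i' (k:ℕ)) then (1:ℝ) else 0) :=
              Finset.sum_congr rfl fun k _ =>
                hpin (q i') (hq i') (fun v => p i = (k:ℕ) ∧ P i v ∧ Q i' (k:ℕ))
          _ = if (P i (q i') ∧ Q i' (p i)) then (1:ℝ) else 0 :=
              hpin (p i) (hp i) (fun v => P i (q i') ∧ Q i' v)

lemma diag : (∑ i : Fin n, ∑ j : Fin n, if ((i:ℕ) = (j:ℕ)) then (1:ℝ) else 0) = n := by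
  have h : ∀ i : Fin n, (∑ j : Fin n, if ((i:ℕ) = (j:ℕ)) then (1:ℝ) else 0) = 1 := by
    intro i
    rw [Finset.sum_eq_single i]
    · simp
    · intro b _ hb
      rw [if_neg]
      intro hv
      exact hb (Fin.ext hv.symm)
    · intro h; exact absurd (Finset.mem_univ _) h
  rw [Finset.sum_congr rfl fun i _ => h i, Finset.sum_const, Finset.card_univ,
    Fintype.card_fin, nsmul_eq_mul, mul_one]

noncomputable def Invf (σ : Equiv.Perm (Fin n)) : ℝ :=
  ∑ i : Fin n, ∑ j : Fin n, if ((i:ℕ) < (j:ℕ) ∧ (σ j:ℕ) < (σ i:ℕ)) then 1 else 0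

noncomputable def Ascf (σ : Equiv.Perm (Fin n)) : ℝ :=
  ∑ i : Fin n, ∑ j : Fin n, if ((i:ℕ) < (j:ℕ) ∧ (σ i:ℕ) < (σ j:ℕ)) then 1 else 0

lemma Inv_add_Asc (σ : Equiv.Perm (Fin n)) :
    Invf σ + Ascf σ = ((n:ℝ)^2 - n)/2 := by
  have hpoint : ∀ i j : Fin n,
      (if ((i:ℕ) < (j:ℕ) ∧ (σ j:ℕ) < (σ i:ℕ)) then (1:ℝ) else 0)
        + (if ((i:ℕ) < (j:ℕ) ∧ (σ i:ℕ) < (σ j:ℕ)) then (1:ℝ) else 0)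
      = if ((i:ℕ) < (j:ℕ)) then (1:ℝ) else 0 := by
    intro i j
    have hv := val_eq_iff σ i j
    split_ifs <;> first | (exfalso; omega) | norm_num
  have h1 : Invf σ + Ascf σ = ∑ i : Fin n, ∑ j : Fin n, if ((i:ℕ) < (j:ℕ)) then (1:ℝ) else 0 := by
    rw [Invf, Ascf, ← Finset.sum_add_distrib]
    refine Finset.sum_congr rfl fun i _ => ?_
    rw [← Finset.sum_add_distrib]
    exact Finset.sum_congr rfl fun j _ => hpoint i j
  have hswap : (∑ i : Fin n, ∑ j : Fin n, if ((i:ℕ) < (j:ℕ)) then (1:ℝ) else 0)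
      = ∑ i : Fin n, ∑ j : Fin n, if ((j:ℕ) < (i:ℕ)) then (1:ℝ) else 0 := Finset.sum_comm
  have hone : ∀ i j : Fin n,
      (if ((i:ℕ) < (j:ℕ)) then (1:ℝ) else 0) + (if ((j:ℕ) < (i:ℕ)) then (1:ℝ) else 0)
        + (if ((i:ℕ) = (j:ℕ)) then (1:ℝ) else 0) = 1 := by
    intro i j; split_ifs <;> first | (exfalso; omega) | norm_num
  have htot : (∑ i : Fin n, ∑ j : Fin n, if ((i:ℕ) < (j:ℕ)) then (1:ℝ) else 0)
      + (∑ i : Fin n, ∑ j : Fin n, if ((j:ℕ) < (i:ℕ)) then (1:ℝ) else 0)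
      + (∑ i : Fin n, ∑ j : Fin n, if ((i:ℕ) = (j:ℕ)) then (1:ℝ) else 0) = (n:ℝ) * n := by
    rw [← Finset.sum_add_distrib, ← Finset.sum_add_distrib]
    have : ∀ i : Fin n,
        ((∑ j : Fin n, if ((i:ℕ) < (j:ℕ)) then (1:ℝ) else 0)
          + (∑ j : Fin n, if ((j:ℕ) < (i:ℕ)) then (1:ℝ) else 0)
          + (∑ j : Fin n, if ((i:ℕ) = (j:ℕ)) then (1:ℝ) else 0))
        = ∑ j : Fin n, (1:ℝ) := by
      intro i
      rw [← Finset.sum_add_distrib, ← Finset.sum_add_distrib]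
      exact Finset.sum_congr rfl fun j _ => hone i j
    rw [Finset.sum_congr rfl fun i _ => this i]
    simp [Finset.sum_const, Finset.card_univ, mul_comm]
  rw [← hswap] at htot
  rw [diag] at htot
  rw [h1]
  linarith

lemma M2 (σ : Equiv.Perm (Fin n)) (ℓ : Fin (n+1)) :
    (∑ k : Fin (n+1), (Af σ k ℓ + Bf σ k ℓ)) = n :=
  calc ∑ k : Fin (n+1), (Af σ k ℓ + Bf σ k ℓ)
      = ∑ k : Fin (n+1), ∑ i : Fin n,
          ((if ((i:ℕ)+1 = (k:ℕ) ∧ (ℓ:ℕ) ≤ (σ i:ℕ)) then (1:ℝ) else 0)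
            + (if ((i:ℕ) = (k:ℕ) ∧ (σ i:ℕ) < (ℓ:ℕ)) then (1:ℝ) else 0)) :=
        Finset.sum_congr rfl fun k _ => Finset.sum_add_distrib.symm
    _ = ∑ i : Fin n, ∑ k : Fin (n+1),
          ((if ((i:ℕ)+1 = (k:ℕ) ∧ (ℓ:ℕ) ≤ (σ i:ℕ)) then (1:ℝ) else 0)
            + (if ((i:ℕ) = (k:ℕ) ∧ (σ i:ℕ) < (ℓ:ℕ)) then (1:ℝ) else 0)) := Finset.sum_comm
    _ = ∑ i : Fin n,
          ((if ((ℓ:ℕ) ≤ (σ i:ℕ)) then (1:ℝ) else 0) + (if ((σ i:ℕ) < (ℓ:ℕ)) then (1:ℝ) else 0)) := by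
        refine Finset.sum_congr rfl fun i _ => ?_
        rw [Finset.sum_add_distrib]
        congr 1
        · exact hpin ((i:ℕ)+1) i.isLt (fun _ => (ℓ:ℕ) ≤ (σ i:ℕ))
        · exact hpin (i:ℕ) (Nat.le_of_lt i.isLt) (fun _ => (σ i:ℕ) < (ℓ:ℕ))
    _ = ∑ _i : Fin n, (1:ℝ) :=
        Finset.sum_congr rfl fun i _ => by split_ifs <;> first | (exfalso; omega) | norm_num
    _ = n := by simp

lemma M3 (σ : Equiv.Perm (Fin n)) : ∑ k : Fin (n+1), Df σ k = (descNum σ : ℝ) :=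
  calc ∑ k : Fin (n+1), Df σ k
      = ∑ k : Fin (n+1), ∑ i : Fin n, ∑ j : Fin n,
          (if ((j:ℕ) = (k:ℕ) ∧ ((i:ℕ)+1 = (j:ℕ) ∧ (σ j:ℕ) < (σ i:ℕ))) then (1:ℝ) else 0) := rfl
    _ = ∑ i : Fin n, ∑ k : Fin (n+1), ∑ j : Fin n,
          (if ((j:ℕ) = (k:ℕ) ∧ ((i:ℕ)+1 = (j:ℕ) ∧ (σ j:ℕ) < (σ i:ℕ))) then (1:ℝ) else 0) :=
        Finset.sum_comm
    _ = ∑ i : Fin n, ∑ j : Fin n, ∑ k : Fin (n+1),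
          (if ((j:ℕ) = (k:ℕ) ∧ ((i:ℕ)+1 = (j:ℕ) ∧ (σ j:ℕ) < (σ i:ℕ))) then (1:ℝ) else 0) :=
        Finset.sum_congr rfl fun i _ => Finset.sum_comm
    _ = ∑ i : Fin n, ∑ j : Fin n,
          (if ((i:ℕ)+1 = (j:ℕ) ∧ (σ j:ℕ) < (σ i:ℕ)) then (1:ℝ) else 0) :=
        Finset.sum_congr rfl fun i _ => Finset.sum_congr rfl fun j _ =>
          hpin (j:ℕ) (Nat.le_of_lt j.isLt) (fun _ => ((i:ℕ)+1 = (j:ℕ) ∧ (σ j:ℕ) < (σ i:ℕ)))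
    _ = (descNum σ : ℝ) := (descNum_eq_sum n σ).symm

lemma sumDelta (σ : Equiv.Perm (Fin n)) :
    ∑ k : Fin (n+1), ∑ ℓ : Fin (n+1), (Af σ k ℓ + Bf σ k ℓ - Df σ k)
      = ((n:ℝ)+1) * ((n:ℝ) - (descNum σ : ℝ)) := by
  have h1 : ∑ k : Fin (n+1), ∑ ℓ : Fin (n+1), (Af σ k ℓ + Bf σ k ℓ) = ((n:ℝ)+1) * n := by
    rw [Finset.sum_comm, Finset.sum_congr rfl fun ℓ _ => M2 σ ℓ, Finset.sum_const,
      Finset.card_univ, Fintype.card_fin, nsmul_eq_mul]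
    push_cast; ring
  have h2 : ∑ k : Fin (n+1), ∑ ℓ : Fin (n+1), Df σ k = ((n:ℝ)+1) * (descNum σ : ℝ) := by
    have hc : ∀ k : Fin (n+1), ∑ _ℓ : Fin (n+1), Df σ k = ((n:ℝ)+1) * Df σ k := by
      intro k
      rw [Finset.sum_const, Finset.card_univ, Fintype.card_fin, nsmul_eq_mul]
      push_cast; ring
    rw [Finset.sum_congr rfl fun k _ => hc k, ← Finset.mul_sum, M3]
  calc ∑ k : Fin (n+1), ∑ ℓ : Fin (n+1), (Af σ k ℓ + Bf σ k ℓ - Df σ k)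
      = (∑ k : Fin (n+1), ∑ ℓ : Fin (n+1), (Af σ k ℓ + Bf σ k ℓ))
          - ∑ k : Fin (n+1), ∑ ℓ : Fin (n+1), Df σ k := by
        simp only [Finset.sum_sub_distrib]
    _ = ((n:ℝ)+1)*n - ((n:ℝ)+1)*(descNum σ : ℝ) := by rw [h1, h2]
    _ = ((n:ℝ)+1) * ((n:ℝ) - (descNum σ : ℝ)) := by ring

lemma t1 (σ : Equiv.Perm (Fin n)) :
    (∑ k : Fin (n+1), ∑ ℓ : Fin (n+1), Af σ k ℓ * Af σ⁻¹ ℓ k) = Invf σ := by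
  have h := collapse2 (fun i : Fin n => (i:ℕ)+1) (fun i' : Fin n => (i':ℕ)+1)
      (fun i => i.isLt) (fun i' => i'.isLt)
      (fun i v => v ≤ (σ i:ℕ)) (fun i' v => v ≤ ((σ⁻¹ i' : Fin n):ℕ))
  calc (∑ k : Fin (n+1), ∑ ℓ : Fin (n+1), Af σ k ℓ * Af σ⁻¹ ℓ k)
      = ∑ i : Fin n, ∑ i' : Fin n,
          (if (((i':ℕ)+1 ≤ (σ i:ℕ)) ∧ ((i:ℕ)+1 ≤ ((σ⁻¹ i' : Fin n):ℕ))) then (1:ℝ) else 0) := h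
    _ = Invf σ := by
        refine Finset.sum_congr rfl fun i _ => ?_
        rw [← Equiv.sum_comp σ (fun i' : Fin n =>
          if (((i':ℕ)+1 ≤ (σ i:ℕ)) ∧ ((i:ℕ)+1 ≤ ((σ⁻¹ i' : Fin n):ℕ))) then (1:ℝ) else 0)]
        refine Finset.sum_congr rfl fun j _ => if_congr ?_ rfl rfl
        rw [← Equiv.Perm.mul_apply, inv_mul_cancel, Equiv.Perm.one_apply]
        omega

lemma t4 (σ : Equiv.Perm (Fin n)) :
    (∑ k : Fin (n+1), ∑ ℓ : Fin (n+1), Bf σ k ℓ * Bf σ⁻¹ ℓ k) = Invf σ := by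
  have h := collapse2 (fun i : Fin n => (i:ℕ)) (fun i' : Fin n => (i':ℕ))
      (fun i => Nat.le_of_lt i.isLt) (fun i' => Nat.le_of_lt i'.isLt)
      (fun i v => (σ i:ℕ) < v) (fun i' v => ((σ⁻¹ i' : Fin n):ℕ) < v)
  calc (∑ k : Fin (n+1), ∑ ℓ : Fin (n+1), Bf σ k ℓ * Bf σ⁻¹ ℓ k)
      = ∑ i : Fin n, ∑ i' : Fin n,
          (if (((σ i:ℕ) < (i':ℕ)) ∧ (((σ⁻¹ i' : Fin n):ℕ) < (i:ℕ))) then (1:ℝ) else 0) := h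
    _ = ∑ i : Fin n, ∑ j : Fin n,
          (if (((σ i:ℕ) < (σ j:ℕ)) ∧ ((j:ℕ) < (i:ℕ))) then (1:ℝ) else 0) := by
        refine Finset.sum_congr rfl fun i _ => ?_
        rw [← Equiv.sum_comp σ (fun i' : Fin n =>
          if (((σ i:ℕ) < (i':ℕ)) ∧ (((σ⁻¹ i' : Fin n):ℕ) < (i:ℕ))) then (1:ℝ) else 0)]
        refine Finset.sum_congr rfl fun j _ => if_congr ?_ rfl rfl
        rw [← Equiv.Perm.mul_apply, inv_mul_cancel, Equiv.Perm.one_apply]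
    _ = Invf σ := by
        rw [Finset.sum_comm, Invf]
        exact Finset.sum_congr rfl fun i _ => Finset.sum_congr rfl fun j _ =>
          if_congr (by tauto) rfl rfl

lemma t2 (σ : Equiv.Perm (Fin n)) :
    (∑ k : Fin (n+1), ∑ ℓ : Fin (n+1), Af σ k ℓ * Bf σ⁻¹ ℓ k) = (n:ℝ) + Ascf σ := by
  have h := collapse2 (fun i : Fin n => (i:ℕ)+1) (fun i' : Fin n => (i':ℕ))
      (fun i => i.isLt) (fun i' => Nat.le_of_lt i'.isLt)
      (fun i v => v ≤ (σ i:ℕ)) (fun i' v => ((σ⁻¹ i' : Fin n):ℕ) < v)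
  calc (∑ k : Fin (n+1), ∑ ℓ : Fin (n+1), Af σ k ℓ * Bf σ⁻¹ ℓ k)
      = ∑ i : Fin n, ∑ i' : Fin n,
          (if (((i':ℕ) ≤ (σ i:ℕ)) ∧ (((σ⁻¹ i' : Fin n):ℕ) < (i:ℕ)+1)) then (1:ℝ) else 0) := h
    _ = ∑ i : Fin n, ∑ j : Fin n,
          (if (((σ j:ℕ) ≤ (σ i:ℕ)) ∧ ((j:ℕ) < (i:ℕ)+1)) then (1:ℝ) else 0) := by
        refine Finset.sum_congr rfl fun i _ => ?_
        rw [← Equiv.sum_comp σ (fun i' : Fin n =>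
          if (((i':ℕ) ≤ (σ i:ℕ)) ∧ (((σ⁻¹ i' : Fin n):ℕ) < (i:ℕ)+1)) then (1:ℝ) else 0)]
        refine Finset.sum_congr rfl fun j _ => if_congr ?_ rfl rfl
        rw [← Equiv.Perm.mul_apply, inv_mul_cancel, Equiv.Perm.one_apply]
    _ = ∑ i : Fin n, ∑ j : Fin n,
          ((if ((i:ℕ) = (j:ℕ)) then (1:ℝ) else 0)
            + (if ((j:ℕ) < (i:ℕ) ∧ (σ j:ℕ) < (σ i:ℕ)) then (1:ℝ) else 0)) := by
        refine Finset.sum_congr rfl fun i _ => Finset.sum_congr rfl fun j _ => ?_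
        have hv := val_eq_iff σ i j
        split_ifs <;> first | (exfalso; omega) | norm_num
    _ = (n:ℝ) + Ascf σ := by
        simp only [Finset.sum_add_distrib]
        rw [diag]
        congr 1
        exact Finset.sum_comm

lemma t3 (σ : Equiv.Perm (Fin n)) :
    (∑ k : Fin (n+1), ∑ ℓ : Fin (n+1), Bf σ k ℓ * Af σ⁻¹ ℓ k) = (n:ℝ) + Ascf σ := by
  have h := collapse2 (fun i : Fin n => (i:ℕ)) (fun i' : Fin n => (i':ℕ)+1)
      (fun i => Nat.le_of_lt i.isLt) (fun i' => i'.isLt)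
      (fun i v => (σ i:ℕ) < v) (fun i' v => v ≤ ((σ⁻¹ i' : Fin n):ℕ))
  calc (∑ k : Fin (n+1), ∑ ℓ : Fin (n+1), Bf σ k ℓ * Af σ⁻¹ ℓ k)
      = ∑ i : Fin n, ∑ i' : Fin n,
          (if (((σ i:ℕ) < (i':ℕ)+1) ∧ ((i:ℕ) ≤ ((σ⁻¹ i' : Fin n):ℕ))) then (1:ℝ) else 0) := h
    _ = ∑ i : Fin n, ∑ j : Fin n,
          (if (((σ i:ℕ) < (σ j:ℕ)+1) ∧ ((i:ℕ) ≤ (j:ℕ))) then (1:ℝ) else 0) := by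
        refine Finset.sum_congr rfl fun i _ => ?_
        rw [← Equiv.sum_comp σ (fun i' : Fin n =>
          if (((σ i:ℕ) < (i':ℕ)+1) ∧ ((i:ℕ) ≤ ((σ⁻¹ i' : Fin n):ℕ))) then (1:ℝ) else 0)]
        refine Finset.sum_congr rfl fun j _ => if_congr ?_ rfl rfl
        rw [← Equiv.Perm.mul_apply, inv_mul_cancel, Equiv.Perm.one_apply]
    _ = ∑ i : Fin n, ∑ j : Fin n,
          ((if ((i:ℕ) = (j:ℕ)) then (1:ℝ) else 0)
            + (if ((i:ℕ) < (j:ℕ) ∧ (σ i:ℕ) < (σ j:ℕ)) then (1:ℝ) else 0)) := by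
        refine Finset.sum_congr rfl fun i _ => Finset.sum_congr rfl fun j _ => ?_
        have hv := val_eq_iff σ i j
        split_ifs <;> first | (exfalso; omega) | norm_num
    _ = (n:ℝ) + Ascf σ := by
        simp only [Finset.sum_add_distrib]
        rw [diag, Ascf]

lemma u2 (σ τ : Equiv.Perm (Fin n)) :
    ∑ k : Fin (n+1), ∑ ℓ : Fin (n+1), (Af σ k ℓ + Bf σ k ℓ) * Df τ ℓ
      = (n:ℝ) * (descNum τ : ℝ) := by
  rw [Finset.sum_comm]
  calc ∑ ℓ : Fin (n+1), ∑ k : Fin (n+1), (Af σ k ℓ + Bf σ k ℓ) * Df τ ℓ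
      = ∑ ℓ : Fin (n+1), (∑ k : Fin (n+1), (Af σ k ℓ + Bf σ k ℓ)) * Df τ ℓ :=
        Finset.sum_congr rfl fun ℓ _ => (Finset.sum_mul _ _ _).symm
    _ = ∑ ℓ : Fin (n+1), (n:ℝ) * Df τ ℓ :=
        Finset.sum_congr rfl fun ℓ _ => by rw [M2]
    _ = (n:ℝ) * ∑ ℓ : Fin (n+1), Df τ ℓ := (Finset.mul_sum _ _ _).symm
    _ = (n:ℝ) * (descNum τ : ℝ) := by rw [M3]

lemma u3 (σ τ : Equiv.Perm (Fin n)) :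
    ∑ k : Fin (n+1), ∑ ℓ : Fin (n+1), Df σ k * (Af τ ℓ k + Bf τ ℓ k)
      = (n:ℝ) * (descNum σ : ℝ) :=
  calc ∑ k : Fin (n+1), ∑ ℓ : Fin (n+1), Df σ k * (Af τ ℓ k + Bf τ ℓ k)
      = ∑ k : Fin (n+1), Df σ k * (∑ ℓ : Fin (n+1), (Af τ ℓ k + Bf τ ℓ k)) :=
        Finset.sum_congr rfl fun k _ => (Finset.mul_sum _ _ _).symm
    _ = ∑ k : Fin (n+1), Df σ k * (n:ℝ) :=
        Finset.sum_congr rfl fun k _ => by rw [M2]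
    _ = (∑ k : Fin (n+1), Df σ k) * (n:ℝ) := (Finset.sum_mul _ _ _).symm
    _ = (n:ℝ) * (descNum σ : ℝ) := by rw [M3]; ring

lemma u4 (σ τ : Equiv.Perm (Fin n)) :
    ∑ k : Fin (n+1), ∑ ℓ : Fin (n+1), Df σ k * Df τ ℓ
      = (descNum σ : ℝ) * (descNum τ : ℝ) :=
  calc ∑ k : Fin (n+1), ∑ ℓ : Fin (n+1), Df σ k * Df τ ℓ
      = ∑ k : Fin (n+1), Df σ k * (∑ ℓ : Fin (n+1), Df τ ℓ) :=
        Finset.sum_congr rfl fun k _ => (Finset.mul_sum _ _ _).symm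
    _ = (∑ k : Fin (n+1), Df σ k) * (∑ ℓ : Fin (n+1), Df τ ℓ) := (Finset.sum_mul _ _ _).symm
    _ = (descNum σ : ℝ) * (descNum τ : ℝ) := by rw [M3, M3]

lemma bigT (σ : Equiv.Perm (Fin n)) :
    ∑ k : Fin (n+1), ∑ ℓ : Fin (n+1),
        (Af σ k ℓ + Bf σ k ℓ - Df σ k) * (Af σ⁻¹ ℓ k + Bf σ⁻¹ ℓ k - Df σ⁻¹ ℓ)
      = ((n:ℝ) - (descNum σ : ℝ)) * ((n:ℝ) - (descNum σ⁻¹ : ℝ)) + n := by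
  have point : ∀ k ℓ : Fin (n+1),
      (Af σ k ℓ + Bf σ k ℓ - Df σ k) * (Af σ⁻¹ ℓ k + Bf σ⁻¹ ℓ k - Df σ⁻¹ ℓ)
      = (Af σ k ℓ * Af σ⁻¹ ℓ k + Af σ k ℓ * Bf σ⁻¹ ℓ k + Bf σ k ℓ * Af σ⁻¹ ℓ k
          + Bf σ k ℓ * Bf σ⁻¹ ℓ k)
        - (Af σ k ℓ + Bf σ k ℓ) * Df σ⁻¹ ℓ - Df σ k * (Af σ⁻¹ ℓ k + Bf σ⁻¹ ℓ k)
        + Df σ k * Df σ⁻¹ ℓ := by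
    intro k ℓ; ring
  rw [Finset.sum_congr rfl fun k _ => Finset.sum_congr rfl fun ℓ _ => point k ℓ]
  simp only [Finset.sum_add_distrib, Finset.sum_sub_distrib]
  rw [t1, t2, t3, t4, u2 σ σ⁻¹, u3 σ σ⁻¹, u4 σ σ⁻¹]
  have h := Inv_add_Asc σ
  linear_combination (2:ℝ) * h

end Aux15

/-- The conditional covariance of the descent and inverse-descent increments under a
uniform insertion equals `n/(n+1)²`. -/
theorem stmt_15 (n : ℕ) (σ : Equiv.Perm (Fin n)) :
    (∑ c : Fin (n + 1) × Fin (n + 1),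
        ((descNum (insertPerm σ c.1 c.2) : ℝ) - descNum σ) *
          ((descNum (insertPerm σ c.1 c.2)⁻¹ : ℝ) - descNum σ⁻¹)) / (n + 1) ^ 2 -
      ((∑ c : Fin (n + 1) × Fin (n + 1),
          ((descNum (insertPerm σ c.1 c.2) : ℝ) - descNum σ)) / (n + 1) ^ 2) *
        ((∑ c : Fin (n + 1) × Fin (n + 1),
          ((descNum (insertPerm σ c.1 c.2)⁻¹ : ℝ) - descNum σ⁻¹)) / (n + 1) ^ 2) =
      (n : ℝ) / (n + 1) ^ 2 := by
  classical
  have h1 : ∀ k ℓ : Fin (n+1),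
      ((descNum (insertPerm σ k ℓ) : ℝ) - descNum σ)
        = Aux15.Af σ k ℓ + Aux15.Bf σ k ℓ - Aux15.Df σ k := by
    intro k ℓ; rw [Aux15.key]; ring
  have h2 : ∀ k ℓ : Fin (n+1),
      ((descNum (insertPerm σ k ℓ)⁻¹ : ℝ) - descNum σ⁻¹)
        = Aux15.Af σ⁻¹ ℓ k + Aux15.Bf σ⁻¹ ℓ k - Aux15.Df σ⁻¹ ℓ := by
    intro k ℓ; rw [Aux15.insertPerm_inv, Aux15.key]; ring
  simp only [Fintype.sum_prod_type]
  simp only [h1, h2]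
  rw [Aux15.bigT σ, Aux15.sumDelta σ]
  have hS' : ∑ k : Fin (n+1), ∑ ℓ : Fin (n+1),
      (Aux15.Af σ⁻¹ ℓ k + Aux15.Bf σ⁻¹ ℓ k - Aux15.Df σ⁻¹ ℓ)
      = ((n:ℝ)+1) * ((n:ℝ) - (descNum σ⁻¹ : ℝ)) := by
    rw [Finset.sum_comm]; exact Aux15.sumDelta σ⁻¹
  rw [hS']
  have hne : ((n:ℝ)+1) ≠ 0 := by positivity
  field_simp
  ring
end
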